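/- arXiv:0904.2753 — 8 statements merged into one kernel-verified Lean document; each statement's English description precedes it below -/
import Mathlib

section
/- Let S be a finite set with m = |S|, N ≥ 0, and let (≤₁, τ) be a pruned 2-tree on S with σ ∈ D(τ, N); identify S with {1, …, m} via the order ≤₁, and let Φ_σ(τ) ⊆ Conf(S) be the union of the Fox–Neuwirth cells FN_{(≤₂,τ̃)} over all pruned 2-trees (≤₂, τ̃) on S with σ ∈ D(τ̃, N) that admit a morphism from (≤₁, τ) inducing the identity on S. For 0 ≤ k ≤ m let F_k = {p ∈ Φ_σ(τ) : y_i = i for all i ≤ k}. Then for every 0 ≤ k ≤ m − 1, F_{k+1} is a deformation retract of F_k; consequently F_m is a deformation retract of Φ_σ(τ) = F_0. -/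
/-- The configuration space `Conf S`: the set of injective maps (configurations)
`p : S → ℝ × ℝ`, as a subset of the product space `S → ℝ × ℝ`. -/
def Conf (S : Type*) : Set (S → ℝ × ℝ) := {p | Function.Injective p}

/-- Condition (I) on a surjection `σ`: consecutive values are distinct. -/
def CondI {S : Type*} {k : ℕ} (σ : Fin k → S) : Prop :=
  ∀ i j : Fin k, (j : ℕ) = (i : ℕ) + 1 → σ i ≠ σ j

/-- Condition (II): no interleaving pattern `i₁ < j₁ < i₂ < j₂` with
`i₁, i₂ ∈ σ⁻¹(s)` and `j₁, j₂ ∈ σ⁻¹(s')` for `s ≠ s'`. -/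
def CondII {S : Type*} {k : ℕ} (σ : Fin k → S) : Prop :=
  ¬ ∃ (s s' : S) (i₁ j₁ i₂ j₂ : Fin k),
      s ≠ s' ∧ i₁ < j₁ ∧ j₁ < i₂ ∧ i₂ < j₂ ∧
      σ i₁ = s ∧ σ i₂ = s ∧ σ j₁ = s' ∧ σ j₂ = s'

/-- `σ ∈ D(S, N)`: a surjection `σ : {1, …, N + |S|} → S` satisfying (I) and (II).
(The condition `k = N + |S|` is imposed as a separate hypothesis in the theorems.) -/
def MemD {S : Type*} {k : ℕ} (σ : Fin k → S) : Prop :=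
  Function.Surjective σ ∧ CondI σ ∧ CondII σ

/-- Condition (C1) on a configuration `p`: if some element of `σ⁻¹(s)` lies strictly
between two elements of `σ⁻¹(s')` (for `s ≠ s'`) then `x_s < x_{s'}`. -/
def CondC1 {S : Type*} {k : ℕ} (σ : Fin k → S) (p : S → ℝ × ℝ) : Prop :=
  ∀ s s' : S, s ≠ s' →
    (∃ i j₁ j₂ : Fin k, σ i = s ∧ σ j₁ = s' ∧ σ j₂ = s' ∧ j₁ < i ∧ i < j₂) →
    (p s).1 < (p s').1

/-- Condition (C2) on a configuration `p`: if `x_s = x_{s'}` (for `s ≠ s'`) and every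
element of `σ⁻¹(s)` is smaller than every element of `σ⁻¹(s')` then `y_s < y_{s'}`. -/
def CondC2 {S : Type*} {k : ℕ} (σ : Fin k → S) (p : S → ℝ × ℝ) : Prop :=
  ∀ s s' : S, s ≠ s' → (p s).1 = (p s').1 →
    (∀ i j : Fin k, σ i = s → σ j = s' → i < j) →
    (p s).2 < (p s').2

/-- A pruned 2-tree on `S`: a linear order `r` (as a `≤`-relation) together with a
surjection `τ : S → Fin n` which is monotone with respect to `r`. -/
def IsPruned2Tree {S : Type*} {n : ℕ} (r : S → S → Prop) (τ : S → Fin n) : Prop :=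
  IsLinearOrder S r ∧ Function.Surjective τ ∧ ∀ s s', r s s' → τ s ≤ τ s'

/-- The Fox–Neuwirth cell of a 2-tree `(r, τ)`: configurations `p` such that
(i) `τ s < τ s'` implies `x_s < x_{s'}`, and (ii) `τ s = τ s'` and `s <₁ s'`
imply `x_s = x_{s'}` and `y_s < y_{s'}`. -/
def FNcell {S : Type*} {n : ℕ} (r : S → S → Prop) (τ : S → Fin n) :
    Set (S → ℝ × ℝ) :=
  {p | Function.Injective p ∧
    (∀ s s', τ s < τ s' → (p s).1 < (p s').1) ∧
    (∀ s s', τ s = τ s' → r s s' → s ≠ s' →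
      (p s).1 = (p s').1 ∧ (p s).2 < (p s').2)}

/-- `σ ∈ D(τ, N)`: the additional conditions (B) and (C) relative to the 2-tree
`(r, τ)` (conditions (I), (II) and surjectivity, i.e. `σ ∈ D(S, N)`, are imposed
separately). -/
def MemDtree {S : Type*} {n k : ℕ} (r : S → S → Prop) (τ : S → Fin n)
    (σ : Fin k → S) : Prop :=
  (∀ s s' : S, s ≠ s' →
      (∃ i j₁ j₂ : Fin k, σ i = s ∧ σ j₁ = s' ∧ σ j₂ = s' ∧ j₁ < i ∧ i < j₂) →
      τ s < τ s') ∧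
  (∀ s s' : S, τ s = τ s' → r s s' → s ≠ s' →
      ∀ i j : Fin k, σ i = s → σ j = s' → i < j)

/-- A morphism of pruned 2-trees on `S` from `(r, τ)` to `(r', τ')` inducing the
identity on `S`: a monotone map `P : Fin n → Fin n'` with `τ' = P ∘ τ` such that
`τ s = τ s'` and `s <₁ s'` imply `s <₂ s'`. -/
def TreeMorphism {S : Type*} {n n' : ℕ} (r : S → S → Prop) (τ : S → Fin n)
    (r' : S → S → Prop) (τ' : S → Fin n') : Prop :=
  ∃ P : Fin n → Fin n', Monotone P ∧ (∀ s, τ' s = P (τ s)) ∧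
    ∀ s s' : S, τ s = τ s' → r s s' → s ≠ s' → r' s s'

/-- The space `Φ_σ(τ)`: the union of the Fox–Neuwirth cells `FN_{(r', τ')}` over all
pruned 2-trees `(r', τ')` on `S` with `σ ∈ D(τ', N)` admitting a morphism from
`(r, τ)` inducing the identity on `S`. -/
def Phi {S : Type*} {n k : ℕ} (r : S → S → Prop) (τ : S → Fin n)
    (σ : Fin k → S) : Set (S → ℝ × ℝ) :=
  {p | ∃ (n' : ℕ) (r' : S → S → Prop) (τ' : S → Fin n'),
      IsPruned2Tree r' τ' ∧ MemDtree r' τ' σ ∧ TreeMorphism r τ r' τ' ∧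
      p ∈ FNcell r' τ'}

/-- `A` is a deformation retract of `X`: there is a continuous
`H : X × [0,1] → X` with `H(x,0) = x`, `H(x,1) ∈ A`, and `H(a,t) = a` for `a ∈ A`. -/
def IsDefRetract {E : Type*} [TopologicalSpace E] (A X : Set E) : Prop :=
  A ⊆ X ∧
  ∃ H : C(↥X × unitInterval, ↥X),
    (∀ x : ↥X, H (x, 0) = x) ∧
    (∀ x : ↥X, (H (x, 1) : E) ∈ A) ∧
    (∀ (x : ↥X) (t : unitInterval), (x : E) ∈ A → H (x, t) = x)

namespace S9aux

abbrev E (m : ℕ) := Fin m → ℝ × ℝ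

def cmb {m : ℕ} (t : ℝ) (p q : E m) : E m :=
  fun s => ((1-t) * (p s).1 + t * (q s).1, (1-t) * (p s).2 + t * (q s).2)

lemma cmb_zero {m : ℕ} (p q : E m) : cmb 0 p q = p := by
  funext s; apply Prod.ext <;> simp [cmb]

lemma cmb_one {m : ℕ} (p q : E m) : cmb 1 p q = q := by
  funext s; apply Prod.ext <;> simp [cmb]

lemma cmb_self {m : ℕ} (t : ℝ) (p : E m) : cmb t p p = p := by
  funext s; apply Prod.ext <;> (simp [cmb]; ring)

lemma lin_le {a b c d t : ℝ} (h0 : 0 ≤ t) (h1 : t ≤ 1) (hab : a ≤ b) (hcd : c ≤ d) :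
    (1-t)*a + t*c ≤ (1-t)*b + t*d := by
  nlinarith [mul_nonneg (sub_nonneg.2 h1) (sub_nonneg.2 hab), mul_nonneg h0 (sub_nonneg.2 hcd)]

lemma lin_lt {a b c d t : ℝ} (h0 : 0 ≤ t) (h1 : t ≤ 1) (hab : a < b) (hcd : c < d) :
    (1-t)*a + t*c < (1-t)*b + t*d := by
  rcases eq_or_lt_of_le h0 with h|h
  · rw [← h]; simpa using hab
  · nlinarith [mul_pos h (sub_pos.2 hcd), mul_nonneg (sub_nonneg.2 h1) (sub_pos.2 hab).le]

lemma lin_cancel {a b c d t : ℝ} (h0 : 0 < t) (h1 : t < 1) (hac : a ≤ c) (hbd : b ≤ d)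
    (h : (1-t)*a + t*b = (1-t)*c + t*d) : a = c ∧ b = d := by
  constructor
  · by_contra hne
    have hlt : a < c := lt_of_le_of_ne hac hne
    nlinarith [mul_pos (show (0:ℝ) < 1-t by linarith) (sub_pos.2 hlt),
      mul_nonneg h0.le (sub_nonneg.2 hbd)]
  · by_contra hne
    have hlt : b < d := lt_of_le_of_ne hbd hne
    nlinarith [mul_pos h0 (sub_pos.2 hlt),
      mul_nonneg (show (0:ℝ) ≤ 1-t by linarith) (sub_nonneg.2 hac)]

variable {m n k : ℕ} {τ : Fin m → Fin n} {σ : Fin k → Fin m}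

/-- Basic x-coordinate facts valid in any cell of `Phi`. -/
lemma cell_x_facts {n₁ : ℕ} {r₁ : Fin m → Fin m → Prop} {τ₁ : Fin m → Fin n₁} {p : E m}
    (hlin : IsLinearOrder (Fin m) r₁)
    (hmor : TreeMorphism (fun a b : Fin m => a ≤ b) τ r₁ τ₁)
    (hcell : p ∈ FNcell r₁ τ₁) :
    (∀ s s', τ₁ s = τ₁ s' → (p s).1 = (p s').1) ∧
    (∀ s s', τ s ≤ τ s' → (p s).1 ≤ (p s').1) ∧
    (∀ s s', (p s).1 = (p s').1 → τ₁ s = τ₁ s') := by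
  obtain ⟨hinj, hi, hii⟩ := hcell
  have fe : ∀ s s', τ₁ s = τ₁ s' → (p s).1 = (p s').1 := by
    intro s s' h
    rcases eq_or_ne s s' with rfl | hne
    · rfl
    · rcases hlin.toTotal.total s s' with hr | hr
      · exact (hii s s' h hr hne).1
      · exact ((hii s' s h.symm hr hne.symm).1).symm
  refine ⟨fe, ?_, ?_⟩
  · intro s s' h
    obtain ⟨P, hPm, hPc, -⟩ := hmor
    have h' : τ₁ s ≤ τ₁ s' := by rw [hPc s, hPc s']; exact hPm h
    rcases lt_or_eq_of_le h' with h'' | h''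
    · exact le_of_lt (hi _ _ h'')
    · exact le_of_eq (fe _ _ h'')
  · intro s s' h
    rcases lt_trichotomy (τ₁ s) (τ₁ s') with h' | h' | h'
    · exact absurd h (ne_of_lt (hi _ _ h'))
    · exact h'
    · exact absurd h.symm (ne_of_lt (hi _ _ h'))

/-- The key convexity lemma: `Phi` is closed under convex combination. -/
lemma Phi_cmb (hσs : Function.Surjective σ) (hτs : Function.Surjective τ)
    {p q : E m}
    (hp : p ∈ Phi (fun a b : Fin m => a ≤ b) τ σ)
    (hq : q ∈ Phi (fun a b : Fin m => a ≤ b) τ σ)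
    {t : ℝ} (h0 : 0 ≤ t) (h1 : t ≤ 1) :
    cmb t p q ∈ Phi (fun a b : Fin m => a ≤ b) τ σ := by
  classical
  rcases eq_or_lt_of_le h0 with h|h0'
  · rw [← h, cmb_zero]; exact hp
  rcases eq_or_lt_of_le h1 with h|h1'
  · rw [h, cmb_one]; exact hq
  obtain ⟨n₁, r₁, τ₁, htree₁, hD₁, hmor₁, hcell₁⟩ := hp
  obtain ⟨n₂, r₂, τ₂, htree₂, hD₂, hmor₂, hcell₂⟩ := hq
  obtain ⟨hfe₁, hle₁, hxe₁⟩ := cell_x_facts htree₁.1 hmor₁ hcell₁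
  obtain ⟨hfe₂, hle₂, hxe₂⟩ := cell_x_facts htree₂.1 hmor₂ hcell₂
  obtain ⟨hinj₁, hi₁, hii₁⟩ := hcell₁
  obtain ⟨hinj₂, hi₂, hii₂⟩ := hcell₂
  set w : E m := cmb t p q with hw
  have hwfst : ∀ s, (w s).1 = (1-t) * (p s).1 + t * (q s).1 := fun s => rfl
  have hwsnd : ∀ s, (w s).2 = (1-t) * (p s).2 + t * (q s).2 := fun s => rfl
  -- x-coordinate facts for w
  have hxle : ∀ s s', τ s ≤ τ s' → (w s).1 ≤ (w s').1 := by
    intro s s' h; rw [hwfst, hwfst]; exact lin_le h0 h1 (hle₁ s s' h) (hle₂ s s' h)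
  have hxeqτ : ∀ s s', τ s = τ s' → (w s).1 = (w s').1 := fun s s' h =>
    le_antisymm (hxle s s' h.le) (hxle s' s h.ge)
  have hx3 : ∀ s s', (w s).1 = (w s').1 → (p s).1 = (p s').1 ∧ (q s).1 = (q s').1 := by
    intro s s' hEq
    rcases lt_trichotomy (τ s) (τ s') with ht|ht|ht
    · have e1 := hle₁ s s' ht.le; have e2 := hle₂ s s' ht.le
      rw [hwfst, hwfst] at hEq
      exact lin_cancel h0' h1' e1 e2 hEq
    · exact ⟨le_antisymm (hle₁ s s' ht.le) (hle₁ s' s ht.ge),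
        le_antisymm (hle₂ s s' ht.le) (hle₂ s' s ht.ge)⟩
    · have e1 := hle₁ s' s ht.le; have e2 := hle₂ s' s ht.le
      rw [hwfst, hwfst] at hEq
      have := lin_cancel h0' h1' e1 e2 hEq.symm
      exact ⟨this.1.symm, this.2.symm⟩
  -- direction dichotomy inside a common fiber
  have hdir : ∀ s s', s ≠ s' → (w s).1 = (w s').1 →
      ((p s).2 < (p s').2 ∧ (q s).2 < (q s').2) ∨
      ((p s').2 < (p s).2 ∧ (q s').2 < (q s).2) := by
    intro s s' hne hx
    obtain ⟨hxp, hxq⟩ := hx3 s s' hx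
    have ht₁ : τ₁ s = τ₁ s' := hxe₁ s s' hxp
    have ht₂ : τ₂ s = τ₂ s' := hxe₂ s s' hxq
    rcases htree₁.1.toTotal.total s s' with hr₁|hr₁ <;>
      rcases htree₂.1.toTotal.total s s' with hr₂|hr₂
    · exact Or.inl ⟨(hii₁ s s' ht₁ hr₁ hne).2, (hii₂ s s' ht₂ hr₂ hne).2⟩
    · obtain ⟨i, hi⟩ := hσs s; obtain ⟨j, hj⟩ := hσs s'
      have hA := hD₁.2 s s' ht₁ hr₁ hne i j hi hj
      have hB := hD₂.2 s' s ht₂.symm hr₂ hne.symm j i hj hi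
      exact absurd hA (not_lt.mpr hB.le)
    · obtain ⟨i, hi⟩ := hσs s; obtain ⟨j, hj⟩ := hσs s'
      have hA := hD₂.2 s s' ht₂ hr₂ hne i j hi hj
      have hB := hD₁.2 s' s ht₁.symm hr₁ hne.symm j i hj hi
      exact absurd hA (not_lt.mpr hB.le)
    · exact Or.inr ⟨(hii₁ s' s ht₁.symm hr₁ hne.symm).2, (hii₂ s' s ht₂.symm hr₂ hne.symm).2⟩
  have hwinj : Function.Injective w := by
    intro s s' hss
    by_contra hne
    have hx : (w s).1 = (w s').1 := by rw [hss]
    have hy : (w s).2 = (w s').2 := by rw [hss]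
    rcases hdir s s' hne hx with ⟨d1,d2⟩|⟨d1,d2⟩
    · have : (w s).2 < (w s').2 := by rw [hwsnd, hwsnd]; exact lin_lt h0 h1 d1 d2
      exact absurd hy (ne_of_lt this)
    · have : (w s').2 < (w s).2 := by rw [hwsnd, hwsnd]; exact lin_lt h0 h1 d1 d2
      exact absurd hy.symm (ne_of_lt this)
  -- the new column function τ'' via ranking of x-values
  set x : Fin m → ℝ := fun s => (w s).1 with hxdef
  set V : Finset ℝ := Finset.image x Finset.univ with hV
  set e := V.orderIsoOfFin rfl with he
  set τ'' : Fin m → Fin V.card :=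
    fun s => e.symm ⟨x s, Finset.mem_image_of_mem x (Finset.mem_univ s)⟩ with hτ''
  have hle'' : ∀ s s', τ'' s ≤ τ'' s' ↔ x s ≤ x s' := by
    intro s s'; rw [hτ'', e.symm.le_iff_le]; exact Subtype.mk_le_mk
  have hlt'' : ∀ s s', τ'' s < τ'' s' ↔ x s < x s' := by
    intro s s'; rw [hτ'', e.symm.lt_iff_lt]; exact Subtype.mk_lt_mk
  have heq'' : ∀ s s', τ'' s = τ'' s' ↔ x s = x s' := by
    intro s s'
    constructor
    · intro h; exact congrArg Subtype.val (e.symm.injective h)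
    · intro h; exact congrArg e.symm (Subtype.ext h)
  have hsurj'' : Function.Surjective τ'' := by
    intro c
    have hc : (e c : ℝ) ∈ Finset.image x Finset.univ := (e c).2
    obtain ⟨s, -, hs⟩ := Finset.mem_image.mp hc
    refine ⟨s, ?_⟩
    show e.symm ⟨x s, Finset.mem_image_of_mem x (Finset.mem_univ s)⟩ = c
    have h2 : (⟨x s, Finset.mem_image_of_mem x (Finset.mem_univ s)⟩ : {a // a ∈ V}) = e c :=
      Subtype.ext hs
    rw [h2, OrderIso.symm_apply_apply]
  -- the new order r''
  set r'' : Fin m → Fin m → Prop :=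
    fun s s' => x s < x s' ∨ (x s = x s' ∧ (w s).2 ≤ (w s').2) with hr''
  -- common direction implies r₁/r₂ directions
  have hdir_r : ∀ s s', s ≠ s' → (w s).1 = (w s').1 → (w s).2 ≤ (w s').2 →
      ((p s).2 < (p s').2 ∧ (q s).2 < (q s').2) := by
    intro s s' hne hx hy
    rcases hdir s s' hne hx with h|⟨d1,d2⟩
    · exact h
    · have : (w s').2 < (w s).2 := by rw [hwsnd, hwsnd]; exact lin_lt h0 h1 d1 d2
      exact absurd hy (not_le.mpr this)
  have hr₁_of : ∀ s s', s ≠ s' → (w s).1 = (w s').1 → (p s).2 < (p s').2 → r₁ s s' := by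
    intro s s' hne hx hlt
    have ht₁ : τ₁ s = τ₁ s' := hxe₁ s s' (hx3 s s' hx).1
    rcases htree₁.1.toTotal.total s s' with hr|hr
    · exact hr
    · exact absurd (hii₁ s' s ht₁.symm hr hne.symm).2 (not_lt.mpr hlt.le)
  -- the linear order structure on r''
  have hlin'' : IsLinearOrder (Fin m) r'' := by
    letI : IsRefl (Fin m) r'' := ⟨fun s => Or.inr ⟨rfl, le_rfl⟩⟩
    letI : IsTrans (Fin m) r'' := ⟨by
      rintro a b c (h1|⟨h1,h1'⟩) (h2|⟨h2,h2'⟩)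
      · exact Or.inl (h1.trans h2)
      · exact Or.inl (h2 ▸ h1)
      · exact Or.inl (h1 ▸ h2)
      · exact Or.inr ⟨h1.trans h2, h1'.trans h2'⟩⟩
    letI : IsAntisymm (Fin m) r'' := ⟨by
      rintro a b (h1|⟨h1,h1'⟩) (h2|⟨h2,h2'⟩)
      · exact absurd h2 (lt_asymm h1)
      · exact absurd h2 (ne_of_gt h1)
      · exact absurd h2 (not_lt.mpr h1.le)
      · exact hwinj (Prod.ext h1 (le_antisymm h1' h2'))⟩
    letI : IsTotal (Fin m) r'' := ⟨by
      intro a b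
      rcases lt_trichotomy (x a) (x b) with h|h|h
      · exact Or.inl (Or.inl h)
      · rcases le_total ((w a).2) ((w b).2) with h'|h'
        · exact Or.inl (Or.inr ⟨h, h'⟩)
        · exact Or.inr (Or.inr ⟨h.symm, h'⟩)
      · exact Or.inr (Or.inl h)⟩
    letI : IsPreorder (Fin m) r'' := ⟨⟩
    letI : IsPartialOrder (Fin m) r'' := ⟨⟩
    constructor
  -- assemble membership in Phi
  refine ⟨V.card, r'', τ'', ⟨hlin'', hsurj'', ?_⟩, ⟨?_, ?_⟩,
    ⟨fun c => τ'' (Function.surjInv hτs c), ?_, ?_, ?_⟩, hwinj, ?_, ?_⟩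
  · -- monotonicity of τ'' w.r.t. r''
    rintro s s' (h|⟨h,-⟩)
    · exact (hle'' s s').mpr h.le
    · exact (hle'' s s').mpr h.le
  · -- MemDtree (B)
    rintro s s' hne ⟨i, j₁, j₂, hi, hj₁, hj₂, hlt1, hlt2⟩
    have hA := hD₁.1 s s' hne ⟨i, j₁, j₂, hi, hj₁, hj₂, hlt1, hlt2⟩
    have hB := hD₂.1 s s' hne ⟨i, j₁, j₂, hi, hj₁, hj₂, hlt1, hlt2⟩
    refine (hlt'' s s').mpr ?_
    show (w s).1 < (w s').1
    rw [hwfst, hwfst]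
    exact lin_lt h0 h1 (hi₁ s s' hA) (hi₂ s s' hB)
  · -- MemDtree (C)
    rintro s s' hteq hr hne i j hi hj
    have hx : (w s).1 = (w s').1 := (heq'' s s').mp hteq
    have hy : (w s).2 ≤ (w s').2 := by
      rcases hr with h|⟨-,h⟩
      · exact absurd h (not_lt.mpr (le_of_eq hx.symm))
      · exact h
    have hd := hdir_r s s' hne hx hy
    have hr₁ : r₁ s s' := hr₁_of s s' hne hx hd.1
    have ht₁ : τ₁ s = τ₁ s' := hxe₁ s s' (hx3 s s' hx).1
    exact hD₁.2 s s' ht₁ hr₁ hne i j hi hj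
  · -- P'' monotone
    intro c c' hcc
    refine (hle'' _ _).mpr ?_
    show (w _).1 ≤ (w _).1
    apply hxle
    rw [Function.surjInv_eq hτs c, Function.surjInv_eq hτs c']
    exact hcc
  · -- τ'' = P'' ∘ τ
    intro s
    refine (heq'' _ _).mpr ?_
    show (w s).1 = (w _).1
    apply hxeqτ
    rw [Function.surjInv_eq hτs (τ s)]
  · -- morphism order condition
    intro s s' hts hss' hne
    obtain ⟨P₁, hP₁m, hP₁c, hM₁⟩ := hmor₁
    obtain ⟨P₂, hP₂m, hP₂c, hM₂⟩ := hmor₂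
    have hr₁ : r₁ s s' := hM₁ s s' hts hss' hne
    have hr₂ : r₂ s s' := hM₂ s s' hts hss' hne
    have ht₁ : τ₁ s = τ₁ s' := by rw [hP₁c s, hP₁c s', hts]
    have ht₂ : τ₂ s = τ₂ s' := by rw [hP₂c s, hP₂c s', hts]
    have hy : (w s).2 < (w s').2 := by
      rw [hwsnd, hwsnd]
      exact lin_lt h0 h1 (hii₁ s s' ht₁ hr₁ hne).2 (hii₂ s s' ht₂ hr₂ hne).2
    exact Or.inr ⟨hxeqτ s s' hts, hy.le⟩
  · -- FNcell (i)
    intro s s' h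
    exact (hlt'' s s').mp h
  · -- FNcell (ii)
    intro s s' hteq hr hne
    have hx : (w s).1 = (w s').1 := (heq'' s s').mp hteq
    refine ⟨hx, ?_⟩
    have hy : (w s).2 ≤ (w s').2 := by
      rcases hr with h|⟨-,h⟩
      · exact absurd h (not_lt.mpr (le_of_eq hx.symm))
      · exact h
    have hd := hdir_r s s' hne hx hy
    rw [hwsnd, hwsnd]
    exact lin_lt h0 h1 hd.1 hd.2

/-! ### The filtration and retractions -/

def Fl (τ : Fin m → Fin n) (σ : Fin k → Fin m) (l : ℕ) : Set (E m) :=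
  {p | p ∈ Phi (fun a b : Fin m => a ≤ b) τ σ ∧
    ∀ i : Fin m, (i : ℕ) < l → (p i).2 = (i : ℕ) + 1}

lemma Fl_antitone {l l' : ℕ} (h : l ≤ l') : Fl τ σ l' ⊆ Fl τ σ l :=
  fun p hp => ⟨hp.1, fun i hi => hp.2 i (lt_of_lt_of_le hi h)⟩

lemma Fl_cmb (hσs : Function.Surjective σ) (hτs : Function.Surjective τ)
    {p q : E m} {l : ℕ} (hp : p ∈ Fl τ σ l) (hq : q ∈ Fl τ σ l)
    {t : ℝ} (h0 : 0 ≤ t) (h1 : t ≤ 1) : cmb t p q ∈ Fl τ σ l := by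
  refine ⟨Phi_cmb hσs hτs hp.1 hq.1 h0 h1, fun i hi => ?_⟩
  show (1-t) * (p i).2 + t * (q i).2 = (i:ℕ) + 1
  rw [hp.2 i hi, hq.2 i hi]; ring

lemma Fl_succ_iff {l : ℕ} (hl : l < m) {p : E m} :
    p ∈ Fl τ σ (l+1) ↔ p ∈ Fl τ σ l ∧ (p ⟨l, hl⟩).2 = (l:ℝ) + 1 := by
  constructor
  · intro hp
    refine ⟨Fl_antitone (Nat.le_succ l) hp, ?_⟩
    have := hp.2 ⟨l, hl⟩ (by simp)
    simpa using this
  · rintro ⟨hp, hv⟩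
    refine ⟨hp.1, fun i hi => ?_⟩
    rcases lt_or_eq_of_le (Nat.lt_succ_iff.mp hi) with h|h
    · exact hp.2 i h
    · have : i = ⟨l, hl⟩ := Fin.ext h
      rw [this]; simpa using hv
  
/-- Anchor configurations. -/
def bpt (τ : Fin m → Fin n) (l : ℕ) (c : ℝ) : E m :=
  fun s => (((τ s : ℕ) : ℝ), if (s : ℕ) = l then c else ((s : ℕ) : ℝ) + 1)

lemma bpt_mem (htree : IsPruned2Tree (fun a b : Fin m => a ≤ b) τ)
    (hτσ : MemDtree (fun a b : Fin m => a ≤ b) τ σ)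
    {l : ℕ} {c : ℝ} (hc1 : (l:ℝ) < c) (hc2 : c < (l:ℝ) + 2) :
    bpt τ l c ∈ Fl τ σ l := by
  have key : ∀ s s' : Fin m, s < s' → (bpt τ l c s).2 < (bpt τ l c s').2 := by
    intro s s' hss
    show (if (s:ℕ) = l then c else ((s:ℕ):ℝ) + 1) < (if (s':ℕ) = l then c else ((s':ℕ):ℝ) + 1)
    by_cases h1 : (s:ℕ) = l <;> by_cases h2 : (s':ℕ) = l
    · exact absurd (h1.trans h2.symm) (Nat.ne_of_lt hss)
    · rw [if_pos h1, if_neg h2]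
      have hval : l + 1 ≤ (s':ℕ) := by
        have := (Fin.lt_iff_val_lt_val.mp hss); omega
      have : (l:ℝ) + 1 ≤ ((s':ℕ):ℝ) := by exact_mod_cast hval
      linarith
    · rw [if_neg h1, if_pos h2]
      have hval : (s:ℕ) + 1 ≤ l := by
        have := (Fin.lt_iff_val_lt_val.mp hss); omega
      have : ((s:ℕ):ℝ) + 1 ≤ (l:ℝ) := by exact_mod_cast hval
      linarith
    · rw [if_neg h1, if_neg h2]
      have := Fin.lt_iff_val_lt_val.mp hss
      have : ((s:ℕ):ℝ) < ((s':ℕ):ℝ) := by exact_mod_cast this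
      linarith
  refine ⟨⟨n, (fun a b : Fin m => a ≤ b), τ, htree, hτσ,
    ⟨id, monotone_id, fun s => rfl, fun s s' _ h _ => h⟩, ?_, ?_, ?_⟩, ?_⟩
  · -- injective
    intro s s' h
    by_contra hne
    rcases lt_or_gt_of_ne hne with hlt|hlt
    · exact absurd (congrArg Prod.snd h) (ne_of_lt (key s s' hlt))
    · exact absurd (congrArg Prod.snd h).symm (ne_of_lt (key s' s hlt))
  · -- (i)
    intro s s' h
    show ((τ s : ℕ) : ℝ) < ((τ s' : ℕ) : ℝ)
    exact_mod_cast (Fin.lt_iff_val_lt_val.mp h)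
  · -- (ii)
    intro s s' hteq hss hne
    constructor
    · show ((τ s : ℕ) : ℝ) = ((τ s' : ℕ) : ℝ)
      rw [hteq]
    · exact key s s' (lt_of_le_of_ne hss hne)
  · -- pinned
    intro i hi
    show (if (i:ℕ) = l then c else ((i:ℕ):ℝ) + 1) = (i:ℕ) + 1
    rw [if_neg (Nat.ne_of_lt hi)]

lemma bpt_val {l : ℕ} (hl : l < m) (c : ℝ) : (bpt τ l c ⟨l, hl⟩).2 = c := by
  show (if ((⟨l,hl⟩ : Fin m):ℕ) = l then c else _) = c
  rw [if_pos rfl]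

/-! ### Continuity -/

lemma continuous_cmb {α : Type*} [TopologicalSpace α] {f : α → ℝ} {P Q : α → E m}
    (hf : Continuous f) (hP : Continuous P) (hQ : Continuous Q) :
    Continuous fun a => cmb (f a) (P a) (Q a) := by
  unfold cmb
  refine continuous_pi fun s => ?_
  have hPs : Continuous fun a => (P a) s := (continuous_apply s).comp hP
  have hQs : Continuous fun a => (Q a) s := (continuous_apply s).comp hQ
  exact (((continuous_const.sub hf).mul hPs.fst).add (hf.mul hQs.fst)).prodMk
    (((continuous_const.sub hf).mul hPs.snd).add (hf.mul hQs.snd))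

/-- General construction of a deformation retract from a retraction map. -/
lemma mk_defretract {A X : Set (E m)} (hAX : A ⊆ X) (r : E m → E m) (hr : Continuous r)
    (hmap : ∀ p ∈ X, r p ∈ A) (hfix : ∀ p ∈ A, r p = p)
    (hconv : ∀ p ∈ X, ∀ t : ℝ, 0 ≤ t → t ≤ 1 → cmb t p (r p) ∈ X) :
    IsDefRetract A X := by
  refine ⟨hAX, ⟨⟨fun z => ⟨cmb (z.2 : ℝ) (z.1 : E m) (r (z.1 : E m)),
      hconv _ z.1.2 _ z.2.2.1 z.2.2.2⟩, ?_⟩, ?_, ?_, ?_⟩⟩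
  · apply Continuous.subtype_mk
    exact continuous_cmb (continuous_subtype_val.comp continuous_snd)
      (continuous_subtype_val.comp continuous_fst)
      (hr.comp (continuous_subtype_val.comp continuous_fst))
  · intro x
    apply Subtype.ext
    show cmb ((0 : unitInterval) : ℝ) (x : E m) (r (x : E m)) = (x : E m)
    rw [show ((0 : unitInterval) : ℝ) = 0 from rfl, cmb_zero]
  · intro x
    show cmb ((1 : unitInterval) : ℝ) (x : E m) (r (x : E m)) ∈ A
    rw [show ((1 : unitInterval) : ℝ) = 1 from rfl, cmb_one]
    exact hmap _ x.2
  · intro x t hx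
    apply Subtype.ext
    show cmb (t : ℝ) (x : E m) (r (x : E m)) = (x : E m)
    rw [hfix _ hx, cmb_self]

lemma alg1 {a : ℝ} (h : 0 ≤ a) :
    (1 - a / (a + 2⁻¹)) * a + (a / (a + 2⁻¹)) * (-2⁻¹) = 0 := by
  have hd : a + 2⁻¹ ≠ 0 := ne_of_gt (by norm_num; linarith)
  have h3 : (1 - a / (a + 2⁻¹)) * a + (a / (a + 2⁻¹)) * (-2⁻¹)
      = a - (a / (a + 2⁻¹)) * (a + 2⁻¹) := by ring
  rw [h3, div_mul_cancel₀ _ hd]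
  ring

lemma alg2 {a : ℝ} (h : a < 0) :
    (1 - -a / (-a + 2⁻¹)) * a + (-a / (-a + 2⁻¹)) * 2⁻¹ = 0 := by
  have hd : -a + 2⁻¹ ≠ 0 := ne_of_gt (by norm_num; linarith)
  have h3 : (1 - -a / (-a + 2⁻¹)) * a + (-a / (-a + 2⁻¹)) * 2⁻¹
      = a + (-a / (-a + 2⁻¹)) * (-a + 2⁻¹) := by ring
  rw [h3, div_mul_cancel₀ _ hd]
  ring

/-- The one-step retraction. -/
lemma step_exists (hσ : MemD σ) (htree : IsPruned2Tree (fun a b : Fin m => a ≤ b) τ)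
    (hτσ : MemDtree (fun a b : Fin m => a ≤ b) τ σ) {l : ℕ} (hl : l < m) :
    ∃ r : E m → E m, Continuous r ∧ (∀ p ∈ Fl τ σ l, r p ∈ Fl τ σ (l+1)) ∧
      (∀ p ∈ Fl τ σ (l+1), r p = p) := by
  have hσs : Function.Surjective σ := hσ.1
  have hτs : Function.Surjective τ := htree.2.1
  set lpt : Fin m := ⟨l, hl⟩ with hlpt
  set g : E m → ℝ := fun p => (p lpt).2 - ((l:ℝ) + 1) with hg
  set bm : E m := bpt τ l ((l:ℝ) + 2⁻¹) with hbm
  set bp : E m := bpt τ l ((l:ℝ) + 1 + 2⁻¹) with hbp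
  have e2 : (2⁻¹:ℝ) = 1/2 := by norm_num
  have hbm_mem : bm ∈ Fl τ σ l := bpt_mem htree hτσ (by rw [e2]; linarith) (by rw [e2]; linarith)
  have hbp_mem : bp ∈ Fl τ σ l := bpt_mem htree hτσ (by rw [e2]; linarith) (by rw [e2]; linarith)
  have hgbm : g bm = -2⁻¹ := by rw [hg]; simp only [hbm, hlpt, bpt_val hl]; ring
  have hgbp : g bp = 2⁻¹ := by rw [hg]; simp only [hbp, hlpt, bpt_val hl]; ring
  set s1 : E m → ℝ := fun p => max (g p) 0 / (max (g p) 0 + 2⁻¹) with hs1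
  set s2 : E m → ℝ := fun p => max (-(g p)) 0 / (max (-(g p)) 0 + 2⁻¹) with hs2
  have hden1 : ∀ p, 0 < max (g p) 0 + 2⁻¹ := by
    intro p; have := le_max_right (g p) 0; linarith
  have hden2 : ∀ p, 0 < max (-(g p)) 0 + 2⁻¹ := by
    intro p; have := le_max_right (-(g p)) 0; linarith
  have hs1_mem : ∀ p, 0 ≤ s1 p ∧ s1 p ≤ 1 := by
    intro p
    constructor
    · exact div_nonneg (le_max_right _ _) (hden1 p).le
    · rw [hs1, div_le_one (hden1 p)]; linarith
  have hs2_mem : ∀ p, 0 ≤ s2 p ∧ s2 p ≤ 1 := by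
    intro p
    constructor
    · exact div_nonneg (le_max_right _ _) (hden2 p).le
    · rw [hs2, div_le_one (hden2 p)]; linarith
  set r : E m → E m := fun p => cmb (s2 p) (cmb (s1 p) p bm) bp with hrdef
  have hgcmb : ∀ (t : ℝ) (p b : E m), g (cmb t p b) = (1-t) * g p + t * g b := by
    intro t p b
    show (1-t) * (p lpt).2 + t * (b lpt).2 - ((l:ℝ)+1) = (1-t) * ((p lpt).2 - ((l:ℝ)+1)) + t * ((b lpt).2 - ((l:ℝ)+1))
    ring
  have hgr : ∀ p, g (r p) = 0 := by
    intro p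
    rcases le_or_gt 0 (g p) with hsgn|hsgn
    · have h2 : s2 p = 0 := by
        rw [hs2]; simp only []
        rw [max_eq_right (neg_nonpos.2 hsgn), zero_div]
      have h1 : s1 p = g p / (g p + 2⁻¹) := by
        rw [hs1]; simp only []
        rw [max_eq_left hsgn]
      rw [hrdef]; simp only []
      rw [h2, cmb_zero, hgcmb, hgbm, h1]
      exact alg1 hsgn
    · have h1 : s1 p = 0 := by
        rw [hs1]; simp only []
        rw [max_eq_right hsgn.le, zero_div]
      have h2 : s2 p = -(g p) / (-(g p) + 2⁻¹) := by
        rw [hs2]; simp only []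
        rw [max_eq_left (by linarith : (0:ℝ) ≤ -(g p))]
      rw [hrdef]; simp only []
      rw [h1, cmb_zero, hgcmb, hgbp, h2]
      exact alg2 hsgn
  have hfix : ∀ p, g p = 0 → r p = p := by
    intro p hp
    have h1 : s1 p = 0 := by rw [hs1]; simp [hp]
    have h2 : s2 p = 0 := by rw [hs2]; simp [hp]
    rw [hrdef]; simp only []
    rw [h1, h2, cmb_zero, cmb_zero]
  have hmem : ∀ p ∈ Fl τ σ l, r p ∈ Fl τ σ l := by
    intro p hp
    exact Fl_cmb hσs hτs (Fl_cmb hσs hτs hp hbm_mem (hs1_mem p).1 (hs1_mem p).2)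
      hbp_mem (hs2_mem p).1 (hs2_mem p).2
  refine ⟨r, ?_, ?_, ?_⟩
  · -- continuity
    have hgc : Continuous g := ((continuous_apply lpt).snd).sub continuous_const
    have hs1c : Continuous s1 := by
      apply Continuous.div (hgc.max continuous_const)
        ((hgc.max continuous_const).add continuous_const)
      intro p; exact (hden1 p).ne'
    have hs2c : Continuous s2 := by
      apply Continuous.div ((hgc.neg).max continuous_const)
        (((hgc.neg).max continuous_const).add continuous_const)
      intro p; exact (hden2 p).ne'
    exact continuous_cmb hs2c (continuous_cmb hs1c continuous_id continuous_const)
      continuous_const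
  · intro p hp
    rw [Fl_succ_iff hl]
    refine ⟨hmem p hp, ?_⟩
    have := hgr p
    rw [hg] at this
    simp only [] at this
    linarith [this]
  · intro p hp
    apply hfix
    rw [hg]
    have := ((Fl_succ_iff hl).mp hp).2
    simp only []
    linarith [this]
end S9aux

open S9aux in
/-- With `S = Fin m` (identified with `{1, …, m}` via `≤₁`, taken to
be the standard order), a pruned 2-tree `(≤, τ)` with `σ ∈ D(τ, N)`, and
`F_l = {p ∈ Φ_σ(τ) : y_i = i for all i ≤ l}`, each `F_{l+1}` is a deformation
retract of `F_l` (`0 ≤ l ≤ m − 1`); consequently `F_m` is a deformation retract of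
`Φ_σ(τ) = F_0`. -/
theorem statement9 (m N k n : ℕ) (hk : k = N + m)
    (τ : Fin m → Fin n)
    (htree : IsPruned2Tree (fun a b : Fin m => a ≤ b) τ)
    (σ : Fin k → Fin m) (hσ : MemD σ)
    (hτσ : MemDtree (fun a b : Fin m => a ≤ b) τ σ) :
    let F : ℕ → Set (Fin m → ℝ × ℝ) := fun l =>
      {p ∈ Phi (fun a b : Fin m => a ≤ b) τ σ |
        ∀ i : Fin m, (i : ℕ) < l → (p i).2 = (i : ℕ) + 1}
    (∀ l < m, IsDefRetract (F (l + 1)) (F l)) ∧ IsDefRetract (F m) (F 0) := by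

  intro F
  have hσs : Function.Surjective σ := hσ.1
  have hτs : Function.Surjective τ := htree.2.1
  have hF : ∀ l, F l = Fl τ σ l := fun l => rfl
  constructor
  · intro l hl
    obtain ⟨r, hrc, hr1, hr2⟩ := step_exists hσ htree hτσ hl
    rw [hF, hF]
    exact mk_defretract (Fl_antitone (Nat.le_succ l)) r hrc hr1 hr2
      (fun p hp t h0 h1 =>
        Fl_cmb hσs hτs hp (Fl_antitone (Nat.le_succ l) (hr1 p hp)) h0 h1)
  · have comp : ∀ j, j ≤ m → ∃ R : (Fin m → ℝ × ℝ) → (Fin m → ℝ × ℝ),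
        Continuous R ∧ (∀ p ∈ Fl τ σ 0, R p ∈ Fl τ σ j) ∧
        (∀ p ∈ Fl τ σ m, R p = p) := by
      intro j
      induction j with
      | zero => exact fun _ => ⟨id, continuous_id, fun p hp => hp, fun p _ => rfl⟩
      | succ j IH =>
        intro hj
        obtain ⟨R, hRc, hR1, hR2⟩ := IH (Nat.le_of_succ_le hj)
        obtain ⟨r, hrc, hr1, hr2⟩ := step_exists hσ htree hτσ (hj : j < m)
        refine ⟨r ∘ R, hrc.comp hRc, fun p hp => hr1 _ (hR1 p hp), fun p hp => ?_⟩
        have h1 : R p = p := hR2 p hp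
        have h2 : r p = p := hr2 p (Fl_antitone hj hp)
        simp [Function.comp, h1, h2]
    obtain ⟨R, hRc, hR1, hR2⟩ := comp m le_rfl
    rw [hF, hF]
    exact mk_defretract (Fl_antitone (Nat.zero_le m)) R hRc hR1 hR2
      (fun p hp t h0 h1 =>
        Fl_cmb hσs hτs hp (Fl_antitone (Nat.zero_le m) (hR1 p hp)) h0 h1)
end

section
/- Let S = S_c ⊔ S_a be an SC set with m = |S|, N ≥ 0, and let σ ∈ D(S, N) satisfy condition (III). Let X_σ ⊆ Conf(S) be the set of configurations satisfying conditions (C1), (C2) and (C3), and identify S with {1, …, m} via the linear order <_σ. Set Y_0 = X_σ, and for 1 ≤ k ≤ m let Y_k = {p ∈ X_σ : y_s = y_1 + s − 1 for all s ≤ k, and min(y_{k+1}, …, y_m) = y_k + 1 (this last condition being vacuous when k = m)}; for 0 ≤ k ≤ m − 1 let Z_k = {p ∈ Y_k : y_{k+1} = min(y_{k+1}, …, y_m)}. Then for every 0 ≤ k ≤ m − 1, Z_k is a deformation retract of Y_k, and Y_{k+1} is a deformation retract of Z_k. -/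
/-- Condition (C3) for an SC set `S = S_c ⊔ S_a` (here `Sa ⊆ S` and `S_c = Saᶜ`):
`x_s = 0` for `s ∈ S_a` and `x_s > 0` for `s ∈ S_c`. -/
def CondC3 {S : Type*} (Sa : Set S) (p : S → ℝ × ℝ) : Prop :=
  (∀ s ∈ Sa, (p s).1 = 0) ∧ (∀ s ∉ Sa, 0 < (p s).1)

/-- Condition (III): `σ⁻¹(s)` is a one-element set for every `s ∈ S_a`. -/
def CondIII {S : Type*} {k : ℕ} (Sa : Set S) (σ : Fin k → S) : Prop :=
  ∀ s ∈ Sa, ∃! i : Fin k, σ i = s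

/-- The relation `<_σ` on `S`: `s <_σ s'` iff `s ≠ s'` and either some element of
`σ⁻¹(s)` lies strictly between two elements of `σ⁻¹(s')`, or every element of
`σ⁻¹(s)` is smaller than every element of `σ⁻¹(s')`. -/
def LtSigma {S : Type*} {k : ℕ} (σ : Fin k → S) (s s' : S) : Prop :=
  s ≠ s' ∧
  ((∃ i j₁ j₂ : Fin k, σ i = s ∧ σ j₁ = s' ∧ σ j₂ = s' ∧ j₁ < i ∧ i < j₂) ∨
   (∀ i j : Fin k, σ i = s → σ j = s' → i < j))

namespace St10

variable {m k : ℕ}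

def Xset (Sa : Set (Fin m)) (σ : Fin k → Fin m) : Set (Fin m → ℝ × ℝ) :=
  {p | Function.Injective p ∧ CondC1 σ p ∧ CondC2 σ p ∧ CondC3 Sa p}

def SETv (a : ℕ) (p : Fin m → ℝ × ℝ) : Set ℝ := {v : ℝ | ∃ s : Fin m, a ≤ (s : ℕ) ∧ (p s).2 = v}

def Tfin (m a : ℕ) : Finset (Fin m) := Finset.univ.filter (fun s => a ≤ (s : ℕ))

lemma Tfin_ne (a : ℕ) (ham : a < m) : (Tfin m a).Nonempty := ⟨⟨a, ham⟩, by simp [Tfin]⟩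

noncomputable def mu (a : ℕ) (ham : a < m) (p : Fin m → ℝ × ℝ) : ℝ :=
  (Tfin m a).inf' (Tfin_ne a ham) (fun s => (p s).2)

lemma mu_le {a : ℕ} (ham : a < m) (p : Fin m → ℝ × ℝ) {s : Fin m} (hs : a ≤ (s : ℕ)) :
    mu a ham p ≤ (p s).2 :=
  Finset.inf'_le _ (by simp [Tfin, hs])

lemma mu_mem {a : ℕ} (ham : a < m) (p : Fin m → ℝ × ℝ) :
    ∃ s : Fin m, a ≤ (s : ℕ) ∧ (p s).2 = mu a ham p := by
  obtain ⟨i, hi, h⟩ := Finset.exists_mem_eq_inf' (Tfin_ne a ham) (fun s => (p s).2)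
  exact ⟨i, by simpa [Tfin] using hi, h.symm⟩

lemma isLeast_mu {a : ℕ} (ham : a < m) (p : Fin m → ℝ × ℝ) :
    IsLeast (SETv a p) (mu a ham p) := by
  constructor
  · exact mu_mem ham p
  · rintro v ⟨s, hs, rfl⟩; exact mu_le ham p hs

lemma mu_eq {a : ℕ} (ham : a < m) {p : Fin m → ℝ × ℝ} {x : ℝ}
    (h : IsLeast (SETv a p) x) : mu a ham p = x :=
  (isLeast_mu ham p).unique h

lemma continuous_inf' {ι X : Type*} [TopologicalSpace X] {T : Finset ι}
    (hT : T.Nonempty) (f : ι → X → ℝ) (hf : ∀ i, Continuous (f i)) :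
    Continuous fun x => T.inf' hT fun i => f i x := by
  induction hT using Finset.Nonempty.cons_induction with
  | singleton i => simp only [Finset.inf'_singleton]; exact hf i
  | cons i T hi hT ih =>
      have h : ∀ x, (Finset.cons i T hi).inf' (Finset.cons_nonempty hi) (fun j => f j x)
          = min (f i x) (T.inf' hT fun j => f j x) := fun x => by rw [Finset.inf'_cons]
      simp only [h]
      exact (hf i).min ih

lemma continuous_mu {a : ℕ} (ham : a < m) :
    Continuous fun p : Fin m → ℝ × ℝ => mu a ham p :=
  continuous_inf' _ _ (fun i => (continuous_apply i).snd)

lemma sameX {Sa : Set (Fin m)} {σ : Fin k → Fin m}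
    (hid : ∀ s s' : Fin m, LtSigma σ s s' ↔ s < s')
    {p : Fin m → ℝ × ℝ} (hp : p ∈ Xset Sa σ) {s s' : Fin m} (hss : s < s')
    (hx : (p s).1 = (p s').1) : (p s).2 < (p s').2 := by
  obtain ⟨-, h1, h2, -⟩ := hp
  obtain ⟨hne, h | h⟩ := (hid s s').mpr hss
  · exact absurd hx (ne_of_lt (h1 s s' hne h))
  · exact h2 s s' hne hx h

lemma condlt {σ : Fin k → Fin m} (hid : ∀ s s' : Fin m, LtSigma σ s s' ↔ s < s')
    {s s' : Fin m} (hne : s ≠ s')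
    (h : ∀ i j : Fin k, σ i = s → σ j = s' → i < j) : s < s' :=
  (hid s s').mp ⟨hne, Or.inr h⟩

/-- `Y a`. -/
def Yset (Sa : Set (Fin m)) (σ : Fin k → Fin m) (hm : 0 < m) (a : ℕ) : Set (Fin m → ℝ × ℝ) :=
  if a = 0 then Xset Sa σ else
    {p ∈ Xset Sa σ |
      (∀ s : Fin m, (s : ℕ) < a → (p s).2 = (p ⟨0, hm⟩).2 + (s : ℕ)) ∧
      (∀ ham : a < m,
        IsLeast {v : ℝ | ∃ s : Fin m, a ≤ (s : ℕ) ∧ (p s).2 = v}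
          ((p ⟨a - 1, Nat.lt_of_le_of_lt (Nat.sub_le a 1) ham⟩).2 + 1))}

def Zset (Sa : Set (Fin m)) (σ : Fin k → Fin m) (hm : 0 < m) (a : ℕ) : Set (Fin m → ℝ × ℝ) :=
  {p ∈ Yset Sa σ hm a | ∀ ham : a < m,
    IsLeast {v : ℝ | ∃ s : Fin m, a ≤ (s : ℕ) ∧ (p s).2 = v} ((p ⟨a, ham⟩).2)}

lemma mem_Yset {Sa : Set (Fin m)} {σ : Fin k → Fin m} {hm : 0 < m} {a : ℕ}
    {p : Fin m → ℝ × ℝ} :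
    p ∈ Yset Sa σ hm a ↔ p ∈ Xset Sa σ ∧
      (∀ s : Fin m, (s : ℕ) < a → (p s).2 = (p ⟨0, hm⟩).2 + (s : ℕ)) ∧
      (a ≠ 0 → ∀ ham : a < m,
        IsLeast (SETv a p)
          ((p ⟨a - 1, Nat.lt_of_le_of_lt (Nat.sub_le a 1) ham⟩).2 + 1)) := by
  rcases eq_or_ne a 0 with rfl | h
  · simp [Yset]
  · rw [Yset, if_neg h]
    constructor
    · rintro ⟨h1, h2, h3⟩; exact ⟨h1, h2, fun _ => h3⟩
    · rintro ⟨h1, h2, h3⟩; exact ⟨h1, h2, h3 h⟩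

lemma mem_Zset {Sa : Set (Fin m)} {σ : Fin k → Fin m} {hm : 0 < m} {a : ℕ}
    {p : Fin m → ℝ × ℝ} :
    p ∈ Zset Sa σ hm a ↔ p ∈ Yset Sa σ hm a ∧
      (∀ ham : a < m, IsLeast (SETv a p) ((p ⟨a, ham⟩).2)) := Iff.rfl


section Part1

variable {Sa : Set (Fin m)} {σ : Fin k → Fin m}

noncomputable def G1 (l : ℕ) (hl : l < m) (p : Fin m → ℝ × ℝ) (t : ℝ) : Fin m → ℝ × ℝ :=
  Function.update p ⟨l, hl⟩ ((p ⟨l, hl⟩).1, (1 - t) * (p ⟨l, hl⟩).2 + t * mu l hl p)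

lemma G1_ne {l : ℕ} {hl : l < m} {p : Fin m → ℝ × ℝ} {t : ℝ} {s : Fin m}
    (hs : s ≠ ⟨l, hl⟩) : G1 l hl p t s = p s := Function.update_of_ne hs _ _

lemma G1_L {l : ℕ} {hl : l < m} {p : Fin m → ℝ × ℝ} {t : ℝ} :
    G1 l hl p t ⟨l, hl⟩ = ((p ⟨l, hl⟩).1, (1 - t) * (p ⟨l, hl⟩).2 + t * mu l hl p) :=
  Function.update_self _ _ _

lemma G1_fst {l : ℕ} {hl : l < m} {p : Fin m → ℝ × ℝ} {t : ℝ} (s : Fin m) :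
    (G1 l hl p t s).1 = (p s).1 := by
  by_cases h : s = ⟨l, hl⟩
  · subst h; rw [G1_L]
  · rw [G1_ne h]

/-- elements pinned below `l` lie strictly below `mu`. -/
lemma pin_lt_mu {l : ℕ} (hl : l < m) {hm : 0 < m} {p : Fin m → ℝ × ℝ}
    (hp : p ∈ Yset Sa σ hm l) {s : Fin m} (hs : (s : ℕ) < l) :
    (p s).2 < mu l hl p := by
  obtain ⟨hX, hpin, hmin⟩ := mem_Yset.mp hp
  have hl0 : l ≠ 0 := by omega
  have hml : mu l hl p = (p ⟨l - 1, Nat.lt_of_le_of_lt (Nat.sub_le l 1) hl⟩).2 + 1 :=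
    mu_eq hl (hmin hl0 hl)
  have hs1 : (p s).2 = (p ⟨0, hm⟩).2 + ((s : ℕ) : ℝ) := hpin s hs
  have hs2 : (p ⟨l - 1, Nat.lt_of_le_of_lt (Nat.sub_le l 1) hl⟩).2
      = (p ⟨0, hm⟩).2 + ((l - 1 : ℕ) : ℝ) := by
    have := hpin ⟨l - 1, Nat.lt_of_le_of_lt (Nat.sub_le l 1) hl⟩ (by simp; omega)
    simpa using this
  have hcast : ((s : ℕ) : ℝ) ≤ ((l - 1 : ℕ) : ℝ) := by
    exact_mod_cast Nat.le_sub_one_of_lt hs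
  rw [hml, hs1, hs2]; linarith

lemma G1_mem (hid : ∀ s s' : Fin m, LtSigma σ s s' ↔ s < s')
    {l : ℕ} (hl : l < m) {hm : 0 < m} {p : Fin m → ℝ × ℝ}
    (hp : p ∈ Yset Sa σ hm l) {t : ℝ} (ht0 : 0 ≤ t) (ht1 : t ≤ 1) :
    G1 l hl p t ∈ Yset Sa σ hm l := by
  obtain ⟨hX, hpin, hmin⟩ := mem_Yset.mp hp
  set L : Fin m := ⟨l, hl⟩ with hLdef
  have hmuL : mu l hl p ≤ (p L).2 := mu_le hl p (le_refl l)
  set yL' : ℝ := (1 - t) * (p L).2 + t * mu l hl p with hyL'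
  have h1 : mu l hl p ≤ yL' := by nlinarith
  have h2 : yL' ≤ (p L).2 := by nlinarith
  have hGL : G1 l hl p t L = ((p L).1, yL') := G1_L
  have hkey : ∀ v : Fin m, v ≠ L → (p v).1 = (p L).1 →
      yL' < (p v).2 ∨ (p v).2 < mu l hl p := by
    intro v hv hx
    rcases lt_or_gt_of_ne (fun h : (v : ℕ) = l => hv (Fin.ext h)) with h | h
    · exact Or.inr (pin_lt_mu hl hp h)
    · left
      have hLv : L < v := h
      have := sameX hid hX hLv hx.symm
      linarith
  have hinj : Function.Injective (G1 l hl p t) := by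
    intro u v huv
    by_cases hu : u = L <;> by_cases hv : v = L
    · rw [hu, hv]
    · exfalso
      subst hu
      rw [hGL, G1_ne hv] at huv
      have hx : (p v).1 = (p L).1 := by rw [← huv]
      have hy : (p v).2 = yL' := by rw [← huv]
      rcases hkey v hv hx with h | h <;> linarith
    · exfalso
      subst hv
      rw [hGL, G1_ne hu] at huv
      have hx : (p u).1 = (p L).1 := by rw [huv]
      have hy : (p u).2 = yL' := by rw [huv]
      rcases hkey u hu hx with h | h <;> linarith
    · exact hX.1 (by rwa [G1_ne hu, G1_ne hv] at huv)
  have hC1 : CondC1 σ (G1 l hl p t) := by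
    intro s s' hne hint
    rw [G1_fst s, G1_fst s']
    exact hX.2.1 s s' hne hint
  have hC2 : CondC2 σ (G1 l hl p t) := by
    intro s s' hne hx hcond
    have hss : s < s' := condlt hid hne hcond
    have hx' : (p s).1 = (p s').1 := by rw [← G1_fst (l := l) (hl := hl) (t := t) s, hx, G1_fst]
    have horig : (p s).2 < (p s').2 := sameX hid hX hss hx'
    by_cases h1s : s = L <;> by_cases h2s : s' = L
    · exact absurd (h1s.trans h2s.symm) hne
    · subst h1s
      rw [hGL, G1_ne h2s]
      dsimp only
      linarith
    · subst h2s
      rw [hGL, G1_ne h1s]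
      dsimp only
      have : (s : ℕ) < l := hss
      linarith [pin_lt_mu hl hp this]
    · rw [G1_ne h1s, G1_ne h2s]; exact horig
  have hC3 : CondC3 Sa (G1 l hl p t) := by
    refine ⟨fun s hs => ?_, fun s hs => ?_⟩
    · rw [G1_fst s]; exact hX.2.2.2.1 s hs
    · rw [G1_fst s]; exact hX.2.2.2.2 s hs
  refine mem_Yset.mpr ⟨⟨hinj, hC1, hC2, hC3⟩, ?_, ?_⟩
  · intro s hs
    have hsL : s ≠ L := by intro h; rw [h] at hs; simp [hLdef] at hs
    have h0L : (⟨0, hm⟩ : Fin m) ≠ L := by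
      intro h
      have : (0 : ℕ) = l := congrArg Fin.val h
      omega
    rw [G1_ne hsL, G1_ne h0L]
    exact hpin s hs
  · intro hl0 ham
    have hl1L : (⟨l - 1, Nat.lt_of_le_of_lt (Nat.sub_le l 1) ham⟩ : Fin m) ≠ L := by
      intro h
      have : l - 1 = l := congrArg Fin.val h
      omega
    have hml : mu l hl p = (p ⟨l - 1, Nat.lt_of_le_of_lt (Nat.sub_le l 1) ham⟩).2 + 1 :=
      mu_eq hl (hmin hl0 ham)
    rw [G1_ne hl1L, ← hml]
    constructor
    · obtain ⟨s0, hs0, hs0eq⟩ := mu_mem hl p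
      by_cases hs0L : s0 = L
      · subst hs0L
        refine ⟨L, le_refl l, ?_⟩
        rw [hGL]
        dsimp only
        linarith [hs0eq]
      · exact ⟨s0, hs0, by rw [G1_ne hs0L]; exact hs0eq⟩
    · rintro v ⟨s, hsl, rfl⟩
      by_cases hsL : s = L
      · subst hsL; rw [hGL]; exact h1
      · rw [G1_ne hsL]; exact mu_le hl p hsl

lemma G1_one_snd_L {l : ℕ} {hl : l < m} {p : Fin m → ℝ × ℝ} :
    (G1 l hl p 1 ⟨l, hl⟩).2 = mu l hl p := by
  rw [G1_L]; dsimp only; ring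

lemma G1_memZ (hid : ∀ s s' : Fin m, LtSigma σ s s' ↔ s < s')
    {l : ℕ} (hl : l < m) {hm : 0 < m} {p : Fin m → ℝ × ℝ}
    (hp : p ∈ Yset Sa σ hm l) :
    G1 l hl p 1 ∈ Zset Sa σ hm l := by
  refine ⟨G1_mem hid hl hp zero_le_one le_rfl, fun ham => ?_⟩
  have hL : (⟨l, ham⟩ : Fin m) = ⟨l, hl⟩ := rfl
  rw [hL, G1_one_snd_L]
  constructor
  · exact ⟨⟨l, hl⟩, le_rfl, G1_one_snd_L⟩
  · rintro v ⟨s, hsl, rfl⟩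
    by_cases hsL : s = ⟨l, hl⟩
    · subst hsL; rw [G1_one_snd_L]
    · rw [G1_ne hsL]; exact mu_le hl p hsl

lemma G1_fix {l : ℕ} (hl : l < m) {hm : 0 < m} {p : Fin m → ℝ × ℝ}
    (hp : p ∈ Zset Sa σ hm l) (t : ℝ) : G1 l hl p t = p := by
  obtain ⟨hY, hZ⟩ := hp
  have hmu : mu l hl p = (p ⟨l, hl⟩).2 := mu_eq hl (hZ hl)
  funext s
  by_cases h : s = ⟨l, hl⟩
  · subst h
    rw [G1_L, hmu]
    have : (1 - t) * (p ⟨l, hl⟩).2 + t * (p ⟨l, hl⟩).2 = (p ⟨l, hl⟩).2 := by ring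
    rw [this]
  · exact G1_ne h

lemma G1_zero {l : ℕ} {hl : l < m} {p : Fin m → ℝ × ℝ} : G1 l hl p 0 = p := by
  funext s
  by_cases h : s = ⟨l, hl⟩
  · subst h
    rw [G1_L]
    have : (1 - (0:ℝ)) * (p ⟨l, hl⟩).2 + 0 * mu l hl p = (p ⟨l, hl⟩).2 := by ring
    rw [this]
  · exact G1_ne h

lemma G1_cont {l : ℕ} {hl : l < m} :
    Continuous fun q : (Fin m → ℝ × ℝ) × ℝ => G1 l hl q.1 q.2 := by
  apply continuous_pi
  intro s
  by_cases h : s = ⟨l, hl⟩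
  · subst h
    simp only [G1_L]
    refine Continuous.prodMk ?_ ?_
    · exact ((continuous_apply _).comp continuous_fst).fst
    · exact (((continuous_const.sub continuous_snd).mul
        ((continuous_apply _).comp continuous_fst).snd).add
        (continuous_snd.mul ((continuous_mu hl).comp continuous_fst)))
  · simp only [G1_ne h]
    exact ((continuous_apply s).comp continuous_fst)

theorem part1 (hid : ∀ s s' : Fin m, LtSigma σ s s' ↔ s < s')
    (l : ℕ) (hl : l < m) (hm : 0 < m) :
    IsDefRetract (Zset Sa σ hm l) (Yset Sa σ hm l) := by
  refine ⟨fun p hp => hp.1, ?_⟩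
  refine ⟨⟨fun q => ⟨G1 l hl q.1.1 q.2.1, G1_mem hid hl q.1.2 q.2.2.1 q.2.2.2⟩, ?_⟩,
    fun x => ?_, fun x => ?_, fun x t hx => ?_⟩
  · exact Continuous.subtype_mk (G1_cont.comp
      ((continuous_subtype_val.comp continuous_fst).prodMk
        (continuous_subtype_val.comp continuous_snd))) _
  · exact Subtype.ext (by simpa using G1_zero (p := (x : Fin m → ℝ × ℝ)))
  · simpa using G1_memZ hid hl x.2
  · exact Subtype.ext (G1_fix hl hx t.1)

end Part1

section Part2

variable {Sa : Set (Fin m)} {σ : Fin k → Fin m}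

noncomputable def cc (l : ℕ) (p : Fin m → ℝ × ℝ) : ℝ :=
  if h : l + 1 < m then (p ⟨l, Nat.lt_of_succ_lt h⟩).2 + 1 - mu (l + 1) h p else 0

noncomputable def G2 (l : ℕ) (p : Fin m → ℝ × ℝ) (t : ℝ) : Fin m → ℝ × ℝ :=
  fun s => if l + 1 ≤ (s : ℕ) then ((p s).1, (p s).2 + t * cc l p) else p s

lemma G2_lo {l : ℕ} {p : Fin m → ℝ × ℝ} {t : ℝ} {s : Fin m} (hs : (s : ℕ) < l + 1) :
    G2 l p t s = p s := by
  unfold G2; rw [if_neg (by omega)]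

lemma G2_hi {l : ℕ} {p : Fin m → ℝ × ℝ} {t : ℝ} {s : Fin m} (hs : l + 1 ≤ (s : ℕ)) :
    G2 l p t s = ((p s).1, (p s).2 + t * cc l p) := by
  unfold G2; rw [if_pos hs]

lemma G2_fst {l : ℕ} {p : Fin m → ℝ × ℝ} {t : ℝ} (s : Fin m) :
    (G2 l p t s).1 = (p s).1 := by
  by_cases h : l + 1 ≤ (s : ℕ)
  · rw [G2_hi h]
  · rw [G2_lo (by omega)]

lemma cc_eq {l : ℕ} (h : l + 1 < m) (p : Fin m → ℝ × ℝ) :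
    cc l p = (p ⟨l, Nat.lt_of_succ_lt h⟩).2 + 1 - mu (l + 1) h p := dif_pos h

/-- In `Z l`, the value at `⟨l⟩` is `IsLeast` of the tail set.  Derived facts. -/
lemma Z_yL_least {l : ℕ} (hl : l < m) {hm : 0 < m} {p : Fin m → ℝ × ℝ}
    (hp : p ∈ Zset Sa σ hm l) :
    IsLeast (SETv l p) ((p ⟨l, hl⟩).2) := hp.2 hl

lemma Z_ub {l : ℕ} (hl : l < m) {hm : 0 < m} {p : Fin m → ℝ × ℝ}
    (hp : p ∈ Zset Sa σ hm l) {u : Fin m} (hu : (u : ℕ) ≤ l) :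
    (p u).2 ≤ (p ⟨l, hl⟩).2 := by
  rcases eq_or_lt_of_le hu with h | h
  · exact le_of_eq (congrArg (fun v => (p v).2) (Fin.ext h))
  · have h1 := pin_lt_mu hl hp.1 h
    have hmu : mu l hl p = (p ⟨l, hl⟩).2 := mu_eq hl (hp.2 hl)
    linarith

/-- key inequality for the second homotopy. -/
lemma G2_ge {l : ℕ} (hl : l < m) {hm : 0 < m} {p : Fin m → ℝ × ℝ}
    (hp : p ∈ Zset Sa σ hm l) {t : ℝ} (ht0 : 0 ≤ t) (ht1 : t ≤ 1)
    {s : Fin m} (hs : l + 1 ≤ (s : ℕ)) :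
    (p ⟨l, hl⟩).2 ≤ (p s).2 + t * cc l p := by
  have hml : l + 1 < m := lt_of_le_of_lt hs s.isLt
  have hnu : (p ⟨l, hl⟩).2 ≤ mu (l + 1) hml p := by
    obtain ⟨s0, hs0, hs0eq⟩ := mu_mem hml p
    exact (Z_yL_least hl hp).2 ⟨s0, by omega, hs0eq⟩
  have hys : mu (l + 1) hml p ≤ (p s).2 := mu_le hml p hs
  rw [cc_eq hml]
  have hLL : (⟨l, Nat.lt_of_succ_lt hml⟩ : Fin m) = ⟨l, hl⟩ := rfl
  rw [hLL]
  nlinarith [mul_nonneg ht0 (sub_nonneg.mpr hnu), mul_nonneg (sub_nonneg.mpr ht1) (sub_nonneg.mpr hnu)]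

/-- strict mixed inequality. -/
lemma G2_mix (hid : ∀ s s' : Fin m, LtSigma σ s s' ↔ s < s')
    {l : ℕ} (hl : l < m) {hm : 0 < m} {p : Fin m → ℝ × ℝ}
    (hp : p ∈ Zset Sa σ hm l) {t : ℝ} (ht0 : 0 ≤ t) (ht1 : t ≤ 1)
    {u s : Fin m} (hu : (u : ℕ) ≤ l) (hs : l + 1 ≤ (s : ℕ))
    (hx : (p u).1 = (p s).1) :
    (p u).2 < (p s).2 + t * cc l p := by
  have hX : p ∈ Xset Sa σ := (mem_Yset.mp hp.1).1
  have hus : u < s := by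
    have : (u : ℕ) < (s : ℕ) := by omega
    exact this
  have horig : (p u).2 < (p s).2 := sameX hid hX hus hx
  have hml : l + 1 < m := lt_of_le_of_lt hs s.isLt
  have hnu : (p ⟨l, hl⟩).2 ≤ mu (l + 1) hml p := by
    obtain ⟨s0, hs0, hs0eq⟩ := mu_mem hml p
    exact (Z_yL_least hl hp).2 ⟨s0, by omega, hs0eq⟩
  have hys : mu (l + 1) hml p ≤ (p s).2 := mu_le hml p hs
  have hub : (p u).2 ≤ (p ⟨l, hl⟩).2 := Z_ub hl hp hu
  rw [cc_eq hml]
  have hLL : (⟨l, Nat.lt_of_succ_lt hml⟩ : Fin m) = ⟨l, hl⟩ := rfl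
  rw [hLL]
  rcases le_or_gt 0 ((p ⟨l, hl⟩).2 + 1 - mu (l + 1) hml p) with h | h
  · nlinarith [mul_nonneg ht0 h]
  · nlinarith [mul_nonneg (sub_nonneg.mpr ht1) (le_of_lt (neg_pos.mpr h))]

lemma G2_mem (hid : ∀ s s' : Fin m, LtSigma σ s s' ↔ s < s')
    {l : ℕ} (hl : l < m) {hm : 0 < m} {p : Fin m → ℝ × ℝ}
    (hp : p ∈ Zset Sa σ hm l) {t : ℝ} (ht0 : 0 ≤ t) (ht1 : t ≤ 1) :
    G2 l p t ∈ Zset Sa σ hm l := by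
  obtain ⟨hX, hpin, hmin⟩ := mem_Yset.mp hp.1
  have hZl := hp.2 hl
  have hinj : Function.Injective (G2 l p t) := by
    intro u v huv
    by_cases hu : l + 1 ≤ (u : ℕ) <;> by_cases hv : l + 1 ≤ (v : ℕ)
    · rw [G2_hi hu, G2_hi hv] at huv
      rw [Prod.mk.injEq] at huv
      obtain ⟨h1, h2⟩ := huv
      exact hX.1 (Prod.ext h1 (by linarith))
    · exfalso
      rw [G2_hi hu, G2_lo (by omega)] at huv
      have hx : (p v).1 = (p u).1 := by rw [← huv]
      have hy : (p v).2 = (p u).2 + t * cc l p := by rw [← huv]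
      have := G2_mix hid hl hp ht0 ht1 (by omega : (v : ℕ) ≤ l) hu hx
      linarith
    · exfalso
      rw [G2_lo (by omega), G2_hi hv] at huv
      have hx : (p u).1 = (p v).1 := by rw [huv]
      have hy : (p u).2 = (p v).2 + t * cc l p := by rw [huv]
      have := G2_mix hid hl hp ht0 ht1 (by omega : (u : ℕ) ≤ l) hv hx
      linarith
    · rw [G2_lo (by omega), G2_lo (by omega)] at huv
      exact hX.1 huv
  have hC1 : CondC1 σ (G2 l p t) := by
    intro s s' hne hint
    rw [G2_fst s, G2_fst s']
    exact hX.2.1 s s' hne hint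
  have hC2 : CondC2 σ (G2 l p t) := by
    intro s s' hne hx hcond
    have hss : s < s' := condlt hid hne hcond
    have hx' : (p s).1 = (p s').1 := by rw [← G2_fst (l := l) (t := t) s, hx, G2_fst]
    have horig : (p s).2 < (p s').2 := sameX hid hX hss hx'
    by_cases h1s : l + 1 ≤ (s : ℕ) <;> by_cases h2s : l + 1 ≤ (s' : ℕ)
    · rw [G2_hi h1s, G2_hi h2s]; dsimp only; linarith
    · exfalso
      have : (s : ℕ) < (s' : ℕ) := hss
      omega
    · rw [G2_lo (by omega), G2_hi h2s]
      exact G2_mix hid hl hp ht0 ht1 (by omega) h2s hx'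
    · rw [G2_lo (by omega), G2_lo (by omega)]; exact horig
  have hC3 : CondC3 Sa (G2 l p t) := by
    refine ⟨fun s hs => ?_, fun s hs => ?_⟩
    · rw [G2_fst s]; exact hX.2.2.2.1 s hs
    · rw [G2_fst s]; exact hX.2.2.2.2 s hs
  have hyLG : G2 l p t ⟨l, hl⟩ = p ⟨l, hl⟩ := G2_lo (Nat.lt_succ_self l)
  have hleast : IsLeast (SETv l (G2 l p t)) ((p ⟨l, hl⟩).2) := by
    constructor
    · exact ⟨⟨l, hl⟩, le_rfl, by rw [hyLG]⟩
    · rintro v ⟨s, hsl, rfl⟩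
      by_cases hsh : l + 1 ≤ (s : ℕ)
      · rw [G2_hi hsh]
        exact G2_ge hl hp ht0 ht1 hsh
      · have hseq : s = ⟨l, hl⟩ := Fin.ext (show (s : ℕ) = l by omega)
        rw [hseq, hyLG]
  refine ⟨mem_Yset.mpr ⟨⟨hinj, hC1, hC2, hC3⟩, ?_, ?_⟩, fun ham => ?_⟩
  · intro s hs
    rw [G2_lo (s := s) (by omega), G2_lo (s := ⟨0, hm⟩) (Nat.succ_pos l)]
    exact hpin s hs
  · intro hl0 ham
    rw [G2_lo (s := ⟨l - 1, Nat.lt_of_le_of_lt (Nat.sub_le l 1) ham⟩) (by show l - 1 < l + 1; omega)]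
    have heq : (p ⟨l - 1, Nat.lt_of_le_of_lt (Nat.sub_le l 1) ham⟩).2 + 1 = (p ⟨l, hl⟩).2 :=
      (hmin hl0 ham).unique (hp.2 hl)
    rw [heq]
    exact hleast
  · show IsLeast (SETv l (G2 l p t)) ((G2 l p t ⟨l, hl⟩).2)
    rw [hyLG]
    exact hleast

lemma G2_one_mem (hid : ∀ s s' : Fin m, LtSigma σ s s' ↔ s < s')
    {l : ℕ} (hl : l < m) {hm : 0 < m} {p : Fin m → ℝ × ℝ}
    (hp : p ∈ Zset Sa σ hm l) :
    G2 l p 1 ∈ Yset Sa σ hm (l + 1) := by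
  have hmem := G2_mem hid hl hp zero_le_one le_rfl
  obtain ⟨hX', hpin', hmin'⟩ := mem_Yset.mp hmem.1
  obtain ⟨hX, hpin, hmin⟩ := mem_Yset.mp hp.1
  have hyLG : G2 l p 1 ⟨l, hl⟩ = p ⟨l, hl⟩ := G2_lo (Nat.lt_succ_self l)
  have h0G : G2 l p 1 ⟨0, hm⟩ = p ⟨0, hm⟩ := G2_lo (Nat.succ_pos l)
  have hyL : (p ⟨l, hl⟩).2 = (p ⟨0, hm⟩).2 + ((l : ℕ) : ℝ) := by
    rcases Nat.eq_zero_or_pos l with h0 | h0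
    · subst h0
      have : (⟨0, hl⟩ : Fin m) = ⟨0, hm⟩ := rfl
      rw [this]
      norm_num
    · have heq : (p ⟨l - 1, Nat.lt_of_le_of_lt (Nat.sub_le l 1) hl⟩).2 + 1 = (p ⟨l, hl⟩).2 :=
        (hmin (by omega) hl).unique (hp.2 hl)
      have hp1 : (p ⟨l - 1, Nat.lt_of_le_of_lt (Nat.sub_le l 1) hl⟩).2
          = (p ⟨0, hm⟩).2 + ((l - 1 : ℕ) : ℝ) := hpin _ (by show l - 1 < l; omega)
      have hcast : ((l - 1 : ℕ) : ℝ) + 1 = ((l : ℕ) : ℝ) := by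
        rw [Nat.cast_sub (show 1 ≤ l by omega)]
        push_cast
        ring
      rw [← heq, hp1]
      linarith
  refine mem_Yset.mpr ⟨hX', ?_, ?_⟩
  · intro s hs
    rcases Nat.lt_or_ge (s : ℕ) l with h | h
    · rw [G2_lo (s := s) (by omega), h0G]
      exact hpin s h
    · have hseq : s = ⟨l, hl⟩ := Fin.ext (show (s : ℕ) = l by omega)
      rw [hseq, hyLG, h0G]
      exact hyL
  · intro _ ham
    have hidx : (⟨l + 1 - 1, Nat.lt_of_le_of_lt (Nat.sub_le (l + 1) 1) ham⟩ : Fin m)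
        = ⟨l, hl⟩ := Fin.ext (show l + 1 - 1 = l by omega)
    rw [hidx, hyLG]
    have hcc : cc l p = (p ⟨l, hl⟩).2 + 1 - mu (l + 1) ham p := cc_eq ham p
    constructor
    · obtain ⟨s0, hs0, hs0eq⟩ := mu_mem ham p
      refine ⟨s0, hs0, ?_⟩
      rw [G2_hi (s := s0) hs0]
      dsimp only
      rw [hs0eq, hcc]
      ring
    · rintro v ⟨s, hsl, rfl⟩
      rw [G2_hi (s := s) hsl]
      dsimp only
      have := mu_le ham p hsl
      rw [hcc]
      linarith

lemma G2_fix {l : ℕ} {hm : 0 < m} {p : Fin m → ℝ × ℝ}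
    (hp : p ∈ Yset Sa σ hm (l + 1)) (t : ℝ) : G2 l p t = p := by
  have hcc : cc l p = 0 := by
    by_cases h : l + 1 < m
    · obtain ⟨hX, hpin, hmin⟩ := mem_Yset.mp hp
      have hmu := mu_eq h (hmin (Nat.succ_ne_zero l) h)
      rw [cc_eq h p, hmu]
      have hidx : (⟨l + 1 - 1, Nat.lt_of_le_of_lt (Nat.sub_le (l + 1) 1) h⟩ : Fin m)
          = ⟨l, Nat.lt_of_succ_lt h⟩ := Fin.ext (show l + 1 - 1 = l by omega)
      rw [hidx]
      ring
    · exact dif_neg h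
  funext s
  by_cases h : l + 1 ≤ (s : ℕ)
  · rw [G2_hi h, hcc]
    simp
  · exact G2_lo (by omega)

lemma G2_zero {l : ℕ} {p : Fin m → ℝ × ℝ} : G2 l p 0 = p := by
  funext s
  by_cases h : l + 1 ≤ (s : ℕ)
  · rw [G2_hi h]
    simp
  · exact G2_lo (by omega)

lemma cc_cont {l : ℕ} : Continuous fun p : Fin m → ℝ × ℝ => cc l p := by
  by_cases h : l + 1 < m
  · simp only [cc, dif_pos h]
    exact (((continuous_apply _).snd).add continuous_const).sub (continuous_mu h)
  · simp only [cc, dif_neg h]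
    exact continuous_const

lemma G2_cont {l : ℕ} : Continuous fun q : (Fin m → ℝ × ℝ) × ℝ => G2 l q.1 q.2 := by
  apply continuous_pi
  intro s
  by_cases h : l + 1 ≤ (s : ℕ)
  · have hrw : ∀ q : (Fin m → ℝ × ℝ) × ℝ,
        G2 l q.1 q.2 s = ((q.1 s).1, (q.1 s).2 + q.2 * cc l q.1) := fun q => G2_hi h
    simp only [hrw]
    exact (((continuous_apply s).comp continuous_fst).fst).prodMk
      ((((continuous_apply s).comp continuous_fst).snd).add
        (continuous_snd.mul (cc_cont.comp continuous_fst)))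
  · have hrw : ∀ q : (Fin m → ℝ × ℝ) × ℝ, G2 l q.1 q.2 s = q.1 s :=
      fun q => G2_lo (by omega)
    simp only [hrw]
    exact (continuous_apply s).comp continuous_fst

lemma Ysucc_subset {l : ℕ} (hl : l < m) {hm : 0 < m} :
    Yset Sa σ hm (l + 1) ⊆ Zset Sa σ hm l := by
  intro p hp
  obtain ⟨hX, hpin, hmin⟩ := mem_Yset.mp hp
  have hyL : (p ⟨l, hl⟩).2 = (p ⟨0, hm⟩).2 + ((l : ℕ) : ℝ) :=
    hpin ⟨l, hl⟩ (by show l < l + 1; omega)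
  have hleast : IsLeast (SETv l p) ((p ⟨l, hl⟩).2) := by
    constructor
    · exact ⟨⟨l, hl⟩, le_rfl, rfl⟩
    · rintro v ⟨s, hsl, rfl⟩
      rcases Nat.lt_or_ge (s : ℕ) (l + 1) with h | h
      · have hseq : s = ⟨l, hl⟩ := Fin.ext (show (s : ℕ) = l by omega)
        rw [hseq]
      · have hml : l + 1 < m := lt_of_le_of_lt h s.isLt
        have h2 := (hmin (Nat.succ_ne_zero l) hml).2 ⟨s, h, rfl⟩
        have hidx : (⟨l + 1 - 1, Nat.lt_of_le_of_lt (Nat.sub_le (l + 1) 1) hml⟩ : Fin m)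
            = ⟨l, hl⟩ := Fin.ext (show l + 1 - 1 = l by omega)
        rw [hidx] at h2
        linarith
  refine ⟨mem_Yset.mpr ⟨hX, fun s hs => hpin s (by omega), fun hl0 ham => ?_⟩,
    fun ham => hleast⟩
  have hp1 : (p ⟨l - 1, Nat.lt_of_le_of_lt (Nat.sub_le l 1) ham⟩).2
      = (p ⟨0, hm⟩).2 + ((l - 1 : ℕ) : ℝ) := hpin _ (by show l - 1 < l + 1; omega)
  have hcast : ((l - 1 : ℕ) : ℝ) + 1 = ((l : ℕ) : ℝ) := by
    rw [Nat.cast_sub (show 1 ≤ l by omega)]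
    push_cast
    ring
  have hkey : (p ⟨l - 1, Nat.lt_of_le_of_lt (Nat.sub_le l 1) ham⟩).2 + 1 = (p ⟨l, hl⟩).2 := by
    rw [hp1, hyL]
    linarith
  rw [hkey]
  exact hleast

theorem part2 (hid : ∀ s s' : Fin m, LtSigma σ s s' ↔ s < s')
    (l : ℕ) (hl : l < m) (hm : 0 < m) :
    IsDefRetract (Yset Sa σ hm (l + 1)) (Zset Sa σ hm l) := by
  refine ⟨Ysucc_subset hl, ?_⟩
  refine ⟨⟨fun q => ⟨G2 l q.1.1 q.2.1, G2_mem hid hl q.1.2 q.2.2.1 q.2.2.2⟩, ?_⟩,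
    fun x => ?_, fun x => ?_, fun x t hx => ?_⟩
  · exact Continuous.subtype_mk (G2_cont.comp
      ((continuous_subtype_val.comp continuous_fst).prodMk
        (continuous_subtype_val.comp continuous_snd))) _
  · exact Subtype.ext (by simpa using G2_zero (p := (x : Fin m → ℝ × ℝ)))
  · simpa using G2_one_mem hid hl x.2
  · exact Subtype.ext (G2_fix hx t.1)

end Part2

end St10


/-- SC case, with `S` identified with `{1, …, m}` via the order
`<_σ`.  For `0 ≤ l ≤ m − 1`, `Z_l` is a deformation retract of `Y_l` and `Y_{l+1}`
is a deformation retract of `Z_l`. -/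
theorem statement10 (m N k : ℕ) (hk : k = N + m) (Sa : Set (Fin m))
    (σ : Fin k → Fin m) (hσ : MemD σ) (hIII : CondIII Sa σ)
    (hid : ∀ s s' : Fin m, LtSigma σ s s' ↔ s < s') :
    ∀ l : ℕ, ∀ hl : l < m,
      (let Xσ : Set (Fin m → ℝ × ℝ) :=
        {p | Function.Injective p ∧ CondC1 σ p ∧ CondC2 σ p ∧ CondC3 Sa p}
      let y1 : (Fin m → ℝ × ℝ) → ℝ :=
        fun p => (p ⟨0, Nat.lt_of_le_of_lt (Nat.zero_le l) hl⟩).2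
      let Y : ℕ → Set (Fin m → ℝ × ℝ) := fun a =>
        if a = 0 then Xσ else
          {p ∈ Xσ |
            (∀ s : Fin m, (s : ℕ) < a → (p s).2 = y1 p + (s : ℕ)) ∧
            (∀ ham : a < m,
              IsLeast {v : ℝ | ∃ s : Fin m, a ≤ (s : ℕ) ∧ (p s).2 = v}
                ((p ⟨a - 1, Nat.lt_of_le_of_lt (Nat.sub_le a 1) ham⟩).2 + 1))}
      let Z : ℕ → Set (Fin m → ℝ × ℝ) := fun a =>
        {p ∈ Y a | ∀ ham : a < m,
          IsLeast {v : ℝ | ∃ s : Fin m, a ≤ (s : ℕ) ∧ (p s).2 = v}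
            ((p ⟨a, ham⟩).2)}
      IsDefRetract (Z l) (Y l) ∧ IsDefRetract (Y (l + 1)) (Z l)) := by
  intro l hl
  intro Xσ y1 Y Z
  exact ⟨St10.part1 hid l hl (Nat.lt_of_le_of_lt (Nat.zero_le l) hl),
         St10.part2 hid l hl (Nat.lt_of_le_of_lt (Nat.zero_le l) hl)⟩
end

section
/- Let S = S_c ⊔ S_a be an SC set with m = |S|, N ≥ 0, and let σ ∈ D(S, N) satisfy condition (III). Let X_σ ⊆ Conf(S) be the set of configurations satisfying conditions (C1), (C2) and (C3); identify S with {1, …, m} via the linear order <_σ, let β : S_c → {1, …, |S_c|} be the order-preserving bijection induced by <_σ, and set Y_m = {p ∈ X_σ : y_s = y_1 + s − 1 for all s ∈ S} and L = {p ∈ Y_m : x_s = 0 for all s ∈ S_a and x_s = β(s) for all s ∈ S_c}. Then L is a deformation retract of Y_m, and L is homeomorphic to the real line ℝ. -/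

private lemma combo_lt' {a a' b b' t : ℝ} (ht0 : 0 ≤ t) (ht1 : t ≤ 1)
    (ha : a < a') (hb : b < b') : (1 - t) * a + t * b < (1 - t) * a' + t * b' := by
  rcases eq_or_lt_of_le ht0 with h | h
  · rw [← h]; simp; linarith
  · nlinarith [mul_nonneg (by linarith : (0:ℝ) ≤ 1 - t) (by linarith : (0:ℝ) ≤ a' - a),
      mul_pos h (by linarith : (0:ℝ) < b' - b)]

/-- SC case, with `S` identified with `{1, …, m}` via `<_σ`.
The line `L` is a deformation retract of `Y_m`, and `L` is homeomorphic to `ℝ`. -/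
theorem statement11 (m N k : ℕ) (hk : k = N + m) (hm : 0 < m)
    (Sa : Set (Fin m)) (σ : Fin k → Fin m) (hσ : MemD σ) (hIII : CondIII Sa σ)
    (hid : ∀ s s' : Fin m, LtSigma σ s s' ↔ s < s') :
    let Xσ : Set (Fin m → ℝ × ℝ) :=
      {p | Function.Injective p ∧ CondC1 σ p ∧ CondC2 σ p ∧ CondC3 Sa p}
    let Ym : Set (Fin m → ℝ × ℝ) :=
      {p ∈ Xσ | ∀ s : Fin m, (p s).2 = (p ⟨0, hm⟩).2 + (s : ℕ)}
    let β : Fin m → ℕ := fun s => 1 + Nat.card {s' : Fin m // s' ∉ Sa ∧ s' < s}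
    let L : Set (Fin m → ℝ × ℝ) :=
      {p ∈ Ym | (∀ s ∈ Sa, (p s).1 = 0) ∧ (∀ s ∉ Sa, (p s).1 = (β s : ℝ))}
    IsDefRetract L Ym ∧ Nonempty (↥L ≃ₜ ℝ) := by
  intro Xσ Ym β L
  classical
  have hβpos : ∀ s : Fin m, 0 < β s := by
    intro s; simp only [β]; omega
  have hβmono : ∀ s s' : Fin m, s ∉ Sa → s' ∉ Sa → s < s' → β s < β s' := by
    intro s s' hs hs' hlt
    have key : {t : Fin m | t ∉ Sa ∧ t < s} ⊂ {t : Fin m | t ∉ Sa ∧ t < s'} := by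
      constructor
      · intro u hu; exact ⟨hu.1, hu.2.trans hlt⟩
      · intro hsub
        exact absurd (hsub (⟨hs, hlt⟩ : s ∈ {t : Fin m | t ∉ Sa ∧ t < s'})).2 (lt_irrefl s)
    have hcard := Set.ncard_lt_ncard key (Set.toFinite _)
    have e1 : Nat.card {t : Fin m // t ∉ Sa ∧ t < s}
        = ({t : Fin m | t ∉ Sa ∧ t < s} : Set (Fin m)).ncard := Nat.card_coe_set_eq _
    have e2 : Nat.card {t : Fin m // t ∉ Sa ∧ t < s'}
        = ({t : Fin m | t ∉ Sa ∧ t < s'} : Set (Fin m)).ncard := Nat.card_coe_set_eq _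
    simp only [β]
    rw [e1, e2]
    omega
  have hlt_of_left : ∀ s s' : Fin m, s ≠ s' →
      (∃ i j₁ j₂ : Fin k, σ i = s ∧ σ j₁ = s' ∧ σ j₂ = s' ∧ j₁ < i ∧ i < j₂) → s < s' :=
    fun s s' hne hex => (hid s s').1 ⟨hne, Or.inl hex⟩
  have hnotSa_of_left : ∀ s s' : Fin m,
      (∃ i j₁ j₂ : Fin k, σ i = s ∧ σ j₁ = s' ∧ σ j₂ = s' ∧ j₁ < i ∧ i < j₂) → s' ∉ Sa := by
    rintro s s' ⟨i, j₁, j₂, hi, hj1, hj2, h1, h2⟩ hmem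
    obtain ⟨u, -, hu⟩ := hIII s' hmem
    have e1 := hu j₁ hj1
    have e2 := hu j₂ hj2
    have h12 : j₁ < j₂ := h1.trans h2
    rw [e1, e2] at h12
    exact lt_irrefl u h12
  set xstar : Fin m → ℝ := fun s => if s ∈ Sa then 0 else (β s : ℝ) with hxstar_def
  have hxa : ∀ s ∈ Sa, xstar s = 0 := by
    intro s hs; simp only [hxstar_def]; exact if_pos hs
  have hxc : ∀ s, s ∉ Sa → xstar s = (β s : ℝ) := by
    intro s hs; simp only [hxstar_def]; exact if_neg hs
  have hxpos : ∀ s, s ∉ Sa → 0 < xstar s := by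
    intro s hs; rw [hxc s hs]; exact_mod_cast hβpos s
  have hx_lt : ∀ s s' : Fin m, s ≠ s' →
      (∃ i j₁ j₂ : Fin k, σ i = s ∧ σ j₁ = s' ∧ σ j₂ = s' ∧ j₁ < i ∧ i < j₂) →
      xstar s < xstar s' := by
    intro s s' hne hex
    have hs' := hnotSa_of_left s s' hex
    have hlt := hlt_of_left s s' hne hex
    rw [hxc s' hs']
    by_cases hs : s ∈ Sa
    · rw [hxa s hs]; exact_mod_cast hβpos s'
    · rw [hxc s hs]; exact_mod_cast hβmono s s' hs hs' hlt
  have hmem_iff : ∀ p : Fin m → ℝ × ℝ, p ∈ Ym ↔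
      (Function.Injective p ∧ CondC1 σ p ∧ CondC2 σ p ∧ CondC3 Sa p) ∧
      ∀ s : Fin m, (p s).2 = (p ⟨0, hm⟩).2 + (s : ℕ) := fun p => Iff.rfl
  have hmemL_iff : ∀ p : Fin m → ℝ × ℝ, p ∈ L ↔
      p ∈ Ym ∧ (∀ s ∈ Sa, (p s).1 = 0) ∧ (∀ s ∉ Sa, (p s).1 = (β s : ℝ)) := fun p => Iff.rfl
  have hmemYm : ∀ (x : Fin m → ℝ) (c : ℝ),
      (∀ s s' : Fin m, s ≠ s' →
        (∃ i j₁ j₂ : Fin k, σ i = s ∧ σ j₁ = s' ∧ σ j₂ = s' ∧ j₁ < i ∧ i < j₂) → x s < x s') →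
      (∀ s ∈ Sa, x s = 0) → (∀ s, s ∉ Sa → 0 < x s) →
      (fun s : Fin m => (x s, c + ((s : ℕ) : ℝ))) ∈ Ym := by
    intro x c hx h0 hpos
    refine (hmem_iff _).2 ⟨⟨?_, ?_, ?_, ?_⟩, ?_⟩
    · intro s s' h
      have h2 := congrArg Prod.snd h
      simp only at h2
      have h3 : ((s : ℕ) : ℝ) = ((s' : ℕ) : ℝ) := by linarith
      have h4 : (s : ℕ) = (s' : ℕ) := Nat.cast_injective h3
      exact Fin.ext h4
    · intro s s' hne hex
      exact hx s s' hne hex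
    · intro s s' hne _ hord
      have hlt : s < s' := (hid s s').1 ⟨hne, Or.inr hord⟩
      have hn : (s : ℕ) < (s' : ℕ) := hlt
      have : ((s : ℕ) : ℝ) < ((s' : ℕ) : ℝ) := Nat.cast_lt.2 hn
      simp only
      linarith
    · exact ⟨fun s hs => h0 s hs, fun s hs => hpos s hs⟩
    · intro s; simp
  -- the straight-line homotopy in the x-coordinates
  have hF : ∀ q : ↥Ym × unitInterval,
      (fun s : Fin m => ((1 - (q.2 : ℝ)) * ((q.1 : Fin m → ℝ × ℝ) s).1 + (q.2 : ℝ) * xstar s,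
        ((q.1 : Fin m → ℝ × ℝ) ⟨0, hm⟩).2 + ((s : ℕ) : ℝ))) ∈ Ym := by
    intro q
    obtain ⟨⟨hinj, hc1, hc2, hc3⟩, hy⟩ := (hmem_iff _).1 q.1.2
    refine hmemYm _ _ ?_ ?_ ?_
    · intro s s' hne hex
      exact combo_lt' q.2.2.1 q.2.2.2 (hc1 s s' hne hex) (hx_lt s s' hne hex)
    · intro s hs
      rw [hc3.1 s hs, hxa s hs]; ring
    · intro s hs
      have := combo_lt' q.2.2.1 q.2.2.2 (hc3.2 s hs) (hxpos s hs)
      nlinarith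
  have hcont : Continuous fun q : ↥Ym × unitInterval =>
      (fun s : Fin m => ((1 - (q.2 : ℝ)) * ((q.1 : Fin m → ℝ × ℝ) s).1 + (q.2 : ℝ) * xstar s,
        ((q.1 : Fin m → ℝ × ℝ) ⟨0, hm⟩).2 + ((s : ℕ) : ℝ))) := by
    apply continuous_pi
    intro s
    have ht : Continuous fun q : ↥Ym × unitInterval => (q.2 : ℝ) :=
      continuous_subtype_val.comp continuous_snd
    have hA : Continuous fun q : ↥Ym × unitInterval => ((q.1 : Fin m → ℝ × ℝ) s).1 :=
      ((continuous_apply s).comp (continuous_subtype_val.comp continuous_fst)).fst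
    have hB : Continuous fun q : ↥Ym × unitInterval => ((q.1 : Fin m → ℝ × ℝ) ⟨0, hm⟩).2 :=
      ((continuous_apply _).comp (continuous_subtype_val.comp continuous_fst)).snd
    exact (((continuous_const.sub ht).mul hA).add (ht.mul continuous_const)).prodMk
      (hB.add continuous_const)
  have h0coe : ((0 : unitInterval) : ℝ) = 0 := rfl
  have h1coe : ((1 : unitInterval) : ℝ) = 1 := rfl
  constructor
  · -- deformation retract
    refine ⟨fun p hp => ((hmemL_iff p).1 hp).1, ⟨fun q => ⟨_, hF q⟩, hcont.subtype_mk _⟩,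
      ?_, ?_, ?_⟩
    · intro x
      apply Subtype.ext
      funext s
      have hy := ((hmem_iff _).1 x.2).2
      apply Prod.ext
      · show (1 - ((0 : unitInterval) : ℝ)) * ((x : Fin m → ℝ × ℝ) s).1
          + ((0 : unitInterval) : ℝ) * xstar s = ((x : Fin m → ℝ × ℝ) s).1
        rw [h0coe]; ring
      · exact (hy s).symm
    · intro x
      refine (hmemL_iff _).2 ⟨hF (x, 1), ?_, ?_⟩
      · intro s hs
        show (1 - ((1 : unitInterval) : ℝ)) * ((x : Fin m → ℝ × ℝ) s).1
          + ((1 : unitInterval) : ℝ) * xstar s = 0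
        rw [h1coe, hxa s hs]; ring
      · intro s hs
        show (1 - ((1 : unitInterval) : ℝ)) * ((x : Fin m → ℝ × ℝ) s).1
          + ((1 : unitInterval) : ℝ) * xstar s = (β s : ℝ)
        rw [h1coe, hxc s hs]; ring
    · intro x t hxL
      apply Subtype.ext
      funext s
      obtain ⟨hxYm, hL0, hLβ⟩ := (hmemL_iff _).1 hxL
      have hy := ((hmem_iff _).1 x.2).2
      have hxx : ((x : Fin m → ℝ × ℝ) s).1 = xstar s := by
        by_cases hs : s ∈ Sa
        · rw [hL0 s hs, hxa s hs]
        · rw [hLβ s hs, hxc s hs]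
      apply Prod.ext
      · show (1 - (t : ℝ)) * ((x : Fin m → ℝ × ℝ) s).1 + (t : ℝ) * xstar s
          = ((x : Fin m → ℝ × ℝ) s).1
        rw [← hxx]; ring
      · exact (hy s).symm
  · -- homeomorphism with ℝ
    have hLmem : ∀ c : ℝ, (fun s : Fin m => (xstar s, c + ((s : ℕ) : ℝ))) ∈ L := by
      intro c
      refine (hmemL_iff _).2 ⟨hmemYm xstar c hx_lt hxa hxpos, ?_, ?_⟩
      · intro s hs; exact hxa s hs
      · intro s hs; exact hxc s hs
    refine ⟨⟨⟨fun p => ((p : Fin m → ℝ × ℝ) ⟨0, hm⟩).2,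
      fun c => ⟨fun s : Fin m => (xstar s, c + ((s : ℕ) : ℝ)), hLmem c⟩, ?_, ?_⟩, ?_, ?_⟩⟩
    · intro p
      apply Subtype.ext
      funext s
      obtain ⟨hpYm, hL0, hLβ⟩ := (hmemL_iff _).1 p.2
      have hy := ((hmem_iff _).1 hpYm).2
      have hxx : ((p : Fin m → ℝ × ℝ) s).1 = xstar s := by
        by_cases hs : s ∈ Sa
        · rw [hL0 s hs, hxa s hs]
        · rw [hLβ s hs, hxc s hs]
      apply Prod.ext
      · exact hxx.symm
      · exact (hy s).symm
    · intro c
      show c + (((⟨0, hm⟩ : Fin m) : ℕ) : ℝ) = c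
      simp
    · exact ((continuous_apply _).comp continuous_subtype_val).snd
    · exact Continuous.subtype_mk
        (continuous_pi fun s => continuous_const.prodMk (continuous_id.add continuous_const)) _
end

section
/- Let T be a finite set, {S_t}_{t∈T} a family of finite sets with S = ⊔_{t∈T} S_t, and let I_s (s ∈ S), J_t (t ∈ T), and J be nonempty finite linearly ordered sets. Let w = (>_w, Q_w) be an element of se(T)^J with inputs {J_t}_{t∈T}, and for each t ∈ T let u_t = (>_{u_t}, Q_{u_t}) be an element of se(S_t)^{J_t} with inputs {I_s}_{s∈S_t}. Then: (a) there exists a unique total order >_v on ⊔_{s∈S} I_s that restricts to >_{u_t} on ⊔_{s∈S_t} I_s for each t ∈ T and makes the map ⊔_{t∈T} Q_{u_t} : ⊔_{s∈S} I_s → (⊔_{t∈T} J_t, >_w) nondecreasing; (b) the pair (>_v, Q_w ∘ ⊔_{t∈T} Q_{u_t}) is an element of se(S)^J with inputs {I_s}_{s∈S}, i.e., >_v restricts to the given order on each I_s, >_v satisfies the non-interleaving condition, and Q_w ∘ ⊔ Q_{u_t} is nondecreasing with respect to >_v. -/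
/-- A total order (strict, as `<`) on the disjoint union `⊔_{i} A i` which restricts
to the given linear order on each `A i` and satisfies the non-interleaving
condition. -/
def IsSeOrder {ι : Type*} {A : ι → Type*} [∀ i, LinearOrder (A i)]
    (r : (Σ i, A i) → (Σ i, A i) → Prop) : Prop :=
  IsStrictTotalOrder (Σ i, A i) r ∧
  (∀ (i : ι) (a b : A i), a < b ↔ r ⟨i, a⟩ ⟨i, b⟩) ∧
  (∀ i₁ i₂ : ι, i₁ ≠ i₂ → ¬ ∃ (a₁ b₁ : A i₁) (a₂ b₂ : A i₂),
      r ⟨i₁, a₁⟩ ⟨i₂, a₂⟩ ∧ r ⟨i₂, a₂⟩ ⟨i₁, b₁⟩ ∧ r ⟨i₁, b₁⟩ ⟨i₂, b₂⟩)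

/-- An element of `se(ι)^J` with inputs `{A i}`: a total order as in `IsSeOrder`
together with a map `Q : ⊔ A i → J` which is nondecreasing with respect to it. -/
def IsSeElem {ι : Type*} {A : ι → Type*} [∀ i, LinearOrder (A i)]
    {J : Type*} [LinearOrder J]
    (r : (Σ i, A i) → (Σ i, A i) → Prop) (Q : (Σ i, A i) → J) : Prop :=
  IsSeOrder r ∧ ∀ x y : Σ i, A i, r x y → Q x ≤ Q y

section

variable {T : Type*} [Fintype T] {St : T → Type*} [∀ t, Fintype (St t)]
  {I : ∀ t, St t → Type*} [∀ t s, Fintype (I t s)] [∀ t s, LinearOrder (I t s)]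
  [∀ t s, Nonempty (I t s)]
  {Jt : T → Type*} [∀ t, Fintype (Jt t)] [∀ t, LinearOrder (Jt t)]
  [∀ t, Nonempty (Jt t)]
  {J : Type*} [Fintype J] [LinearOrder J] [Nonempty J]

/-- The map `⊔_t Q_{u_t} : ⊔_{s ∈ S} I_s → ⊔_{t ∈ T} J_t`, where
`S = ⊔_t S_t`. -/
def FMap (Qu : ∀ t, (Σ s : St t, I t s) → Jt t)
    (x : Σ q : Σ t, St t, I q.1 q.2) : Σ t, Jt t :=
  ⟨x.1.1, Qu x.1.1 ⟨x.1.2, x.2⟩⟩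

/-- The characterizing conditions of the order `>_v` of the operadic composition:
it is a total order on `⊔_{s ∈ S} I_s` restricting to `>_{u_t}` on
`⊔_{s ∈ S_t} I_s` for each `t`, and it makes `⊔_t Q_{u_t}` nondecreasing with
respect to `>_w`. -/
def IsCompOrder (rW : (Σ t, Jt t) → (Σ t, Jt t) → Prop)
    (ru : ∀ t, (Σ s : St t, I t s) → (Σ s : St t, I t s) → Prop)
    (Qu : ∀ t, (Σ s : St t, I t s) → Jt t)
    (rv : (Σ q : Σ t, St t, I q.1 q.2) → (Σ q : Σ t, St t, I q.1 q.2) → Prop) :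
    Prop :=
  IsStrictTotalOrder (Σ q : Σ t, St t, I q.1 q.2) rv ∧
  (∀ (t : T) (a b : Σ s : St t, I t s),
      ru t a b ↔ rv ⟨⟨t, a.1⟩, a.2⟩ ⟨⟨t, b.1⟩, b.2⟩) ∧
  (∀ x y : Σ q : Σ t, St t, I q.1 q.2,
      rv x y → FMap Qu x = FMap Qu y ∨ rW (FMap Qu x) (FMap Qu y))

end

set_option linter.unusedSectionVars false

section helpers

variable {T : Type*} [Fintype T] {St : T → Type*} [∀ t, Fintype (St t)]
  {I : ∀ t, St t → Type*} [∀ t s, Fintype (I t s)] [∀ t s, LinearOrder (I t s)]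
  [∀ t s, Nonempty (I t s)]
  {Jt : T → Type*} [∀ t, Fintype (Jt t)] [∀ t, LinearOrder (Jt t)]
  [∀ t, Nonempty (Jt t)]

/-- Embedding of the `t`-component into the total disjoint union. -/
def Emb (t : T) (a : Σ s : St t, I t s) : Σ q : Σ t, St t, I q.1 q.2 :=
  ⟨⟨t, a.1⟩, a.2⟩

lemma emb_inj {t : T} {a b : Σ s : St t, I t s}
    (h : Emb (I := I) t a = Emb t b) : a = b := by
  obtain ⟨s₁, i₁⟩ := a; obtain ⟨s₂, i₂⟩ := b
  simp only [Emb, Sigma.mk.inj_iff, heq_eq_eq, true_and] at h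
  obtain ⟨rfl, h2⟩ := h
  cases eq_of_heq h2; rfl

lemma emb_fst (t : T) (a : Σ s : St t, I t s) : (Emb (I := I) t a).1.1 = t := rfl

lemma x_eq_emb (x : Σ q : Σ t, St t, I q.1 q.2) :
    x = Emb (I := I) x.1.1 ⟨x.1.2, x.2⟩ := rfl

/-- The candidate composite order. -/
def RV (rW : (Σ t, Jt t) → (Σ t, Jt t) → Prop)
    (ru : ∀ t, (Σ s : St t, I t s) → (Σ s : St t, I t s) → Prop)
    (Qu : ∀ t, (Σ s : St t, I t s) → Jt t)
    (x y : Σ q : Σ t, St t, I q.1 q.2) : Prop :=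
  (∃ (t : T) (a b : Σ s : St t, I t s), x = Emb t a ∧ y = Emb t b ∧ ru t a b) ∨
  (x.1.1 ≠ y.1.1 ∧ rW (FMap Qu x) (FMap Qu y))

end helpers

section mainlemmas

variable {T : Type*} [Fintype T] {St : T → Type*} [∀ t, Fintype (St t)]
  {I : ∀ t, St t → Type*} [∀ t s, Fintype (I t s)] [∀ t s, LinearOrder (I t s)]
  [∀ t s, Nonempty (I t s)]
  {Jt : T → Type*} [∀ t, Fintype (Jt t)] [∀ t, LinearOrder (Jt t)]
  [∀ t, Nonempty (Jt t)]
  {J : Type*} [Fintype J] [LinearOrder J] [Nonempty J]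

lemma rv_isCompOrder
    (rW : (Σ t, Jt t) → (Σ t, Jt t) → Prop)
    (ru : ∀ t, (Σ s : St t, I t s) → (Σ s : St t, I t s) → Prop)
    (Qu : ∀ t, (Σ s : St t, I t s) → Jt t)
    (hwSTO : IsStrictTotalOrder (Σ t, Jt t) rW)
    (hwr : ∀ (t : T) (a b : Jt t), a < b ↔ rW ⟨t, a⟩ ⟨t, b⟩)
    (hu : ∀ t, IsSeElem (ru t) (Qu t)) :
    IsCompOrder rW ru Qu (RV rW ru Qu) := by
  haveI := hwSTO
  have key : ∀ {t : T} {a b : Σ s : St t, I t s}, ru t a b →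
      FMap Qu (Emb t a) = FMap Qu (Emb t b) ∨
        rW (FMap Qu (Emb t a)) (FMap Qu (Emb t b)) := by
    intro t a b h
    rcases lt_or_eq_of_le ((hu t).2 a b h) with hlt | heq
    · exact Or.inr ((hwr t _ _).mp hlt)
    · left
      show (⟨t, Qu t a⟩ : Σ t, Jt t) = ⟨t, Qu t b⟩
      rw [heq]
  refine ⟨{ trichotomous := ?_, irrefl := ?_, trans := ?_ }, ?_, ?_⟩
  · -- trichotomy
    intro x y
    suffices hT : RV rW ru Qu x y ∨ x = y ∨ RV rW ru Qu y x by
      intro h1 h2; rcases hT with h | h | h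
      · exact absurd h h1
      · exact h
      · exact absurd h h2
    by_cases h : x.1.1 = y.1.1
    · obtain ⟨⟨tx, sx⟩, ax⟩ := x; obtain ⟨⟨ty, sy⟩, ay⟩ := y
      dsimp at h; subst h
      haveI := (hu tx).1.1
      rcases trichotomous_of (ru tx) ⟨sx, ax⟩ ⟨sy, ay⟩ with h1 | h1 | h1
      · exact Or.inl (Or.inl ⟨tx, ⟨sx, ax⟩, ⟨sy, ay⟩, rfl, rfl, h1⟩)
      · exact Or.inr (Or.inl (congrArg (Emb tx) h1))
      · exact Or.inr (Or.inr (Or.inl ⟨tx, ⟨sy, ay⟩, ⟨sx, ax⟩, rfl, rfl, h1⟩))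
    · rcases trichotomous_of rW (FMap Qu x) (FMap Qu y) with h1 | h1 | h1
      · exact Or.inl (Or.inr ⟨h, h1⟩)
      · exact absurd (congrArg Sigma.fst h1) h
      · exact Or.inr (Or.inr (Or.inr ⟨Ne.symm h, h1⟩))
  · -- irreflexivity
    rintro x (⟨t, a, b, hxa, hxb, hab⟩ | ⟨hne, -⟩)
    · have : a = b := emb_inj (hxa.symm.trans hxb)
      subst this
      haveI := (hu t).1.1
      exact irrefl_of (ru t) a hab
    · exact hne rfl
  · -- transitivity
    rintro x y z (⟨t, a, b, hxa, hyb, hab⟩ | ⟨hne, hW⟩)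
        (⟨t', b', c, hyb', hzc, hbc⟩ | ⟨hne', hW'⟩)
    · subst hxa hzc
      have he : Emb t b = Emb t' b' := hyb.symm.trans hyb'
      have ht : t = t' := congrArg (fun z => z.1.1) he
      subst ht
      have hb : b = b' := emb_inj he
      subst hb
      haveI := (hu t).1.1
      exact Or.inl ⟨t, a, c, rfl, rfl, trans_of (ru t) hab hbc⟩
    · subst hxa; subst hyb
      refine Or.inr ⟨hne', ?_⟩
      rcases key hab with he | hr
      · rw [show FMap Qu (Emb t a) = FMap Qu (Emb t b) from he]; exact hW'
      · exact trans_of rW hr hW'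
    · subst hyb'; subst hzc
      refine Or.inr ⟨hne, ?_⟩
      rcases key hbc with he | hr
      · rw [← show FMap Qu (Emb t' b') = FMap Qu (Emb t' c) from he]; exact hW
      · exact trans_of rW hW hr
    · by_cases hxz : x.1.1 = z.1.1
      · obtain ⟨⟨tx, sx⟩, ax⟩ := x; obtain ⟨⟨tz, sz⟩, az⟩ := z
        dsimp at hxz; subst hxz
        haveI := (hu tx).1.1
        have hWxz : rW (FMap Qu ⟨⟨tx, sx⟩, ax⟩) (FMap Qu ⟨⟨tx, sz⟩, az⟩) :=
          trans_of rW hW hW'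
        rcases trichotomous_of (ru tx) ⟨sx, ax⟩ ⟨sz, az⟩ with h1 | h1 | h1
        · exact Or.inl ⟨tx, ⟨sx, ax⟩, ⟨sz, az⟩, rfl, rfl, h1⟩
        · exfalso
          have : FMap Qu (⟨⟨tx, sx⟩, ax⟩ : Σ q : Σ t, St t, I q.1 q.2)
              = FMap Qu ⟨⟨tx, sz⟩, az⟩ :=
            congrArg (fun p => (⟨tx, Qu tx p⟩ : Σ t, Jt t)) h1
          rw [this] at hWxz
          exact irrefl_of rW _ hWxz
        · exact absurd ((hwr tx _ _).mpr hWxz)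
            (not_lt.mpr ((hu tx).2 _ _ h1))
      · exact Or.inr ⟨hxz, trans_of rW hW hW'⟩
  · -- restriction
    intro t a b
    constructor
    · intro h
      exact Or.inl ⟨t, a, b, rfl, rfl, h⟩
    · rintro (⟨t', a', b', h1, h2, h3⟩ | ⟨hne, -⟩)
      · have h1' : Emb t a = Emb t' a' := h1
        have h2' : Emb t b = Emb t' b' := h2
        have ht : t = t' := congrArg (fun z => z.1.1) h1'
        subst ht
        rw [emb_inj h1', emb_inj h2']
        exact h3
      · exact absurd rfl hne
  · -- nondecreasing
    rintro x y (⟨t, a, b, hxa, hyb, hab⟩ | ⟨-, hW⟩)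
    · subst hxa; subst hyb
      exact key hab
    · exact Or.inr hW

lemma isCompOrder_imp
    (rW : (Σ t, Jt t) → (Σ t, Jt t) → Prop)
    (ru : ∀ t, (Σ s : St t, I t s) → (Σ s : St t, I t s) → Prop)
    (Qu : ∀ t, (Σ s : St t, I t s) → Jt t)
    (hwSTO : IsStrictTotalOrder (Σ t, Jt t) rW)
    (hu : ∀ t, IsSeElem (ru t) (Qu t))
    (r1 r2 : (Σ q : Σ t, St t, I q.1 q.2) → (Σ q : Σ t, St t, I q.1 q.2) → Prop)
    (h1 : IsCompOrder rW ru Qu r1) (h2 : IsCompOrder rW ru Qu r2)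
    (x y : Σ q : Σ t, St t, I q.1 q.2) (hxy : r1 x y) : r2 x y := by
  obtain ⟨hS1, hR1, hM1⟩ := h1
  obtain ⟨hS2, hR2, hM2⟩ := h2
  haveI := hwSTO; haveI := hS1; haveI := hS2
  rcases trichotomous_of r2 x y with h | h | h
  · exact h
  · exfalso; subst h; exact irrefl_of r1 x hxy
  · exfalso
    rcases hM1 x y hxy with he | hr
    · rcases hM2 y x h with he' | hr'
      · -- both images equal: same component
        have ht : x.1.1 = y.1.1 := congrArg (fun z : Σ t, Jt t => z.1) he
        obtain ⟨⟨tx, sx⟩, ax⟩ := x; obtain ⟨⟨ty, sy⟩, ay⟩ := y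
        dsimp at ht; subst ht
        haveI := (hu tx).1.1
        have hu1 : ru tx ⟨sx, ax⟩ ⟨sy, ay⟩ := (hR1 tx ⟨sx, ax⟩ ⟨sy, ay⟩).mpr hxy
        have hu2 : ru tx ⟨sy, ay⟩ ⟨sx, ax⟩ := (hR2 tx ⟨sy, ay⟩ ⟨sx, ax⟩).mpr h
        exact asymm_of (ru tx) hu1 hu2
      · rw [he] at hr'; exact irrefl_of rW _ hr'
    · rcases hM2 y x h with he' | hr'
      · rw [he'] at hr; exact irrefl_of rW _ hr
      · exact asymm_of rW hr hr'

lemma compOrder_isSeElem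
    (rW : (Σ t, Jt t) → (Σ t, Jt t) → Prop) (Qw : (Σ t, Jt t) → J)
    (hw : IsSeElem rW Qw)
    (ru : ∀ t, (Σ s : St t, I t s) → (Σ s : St t, I t s) → Prop)
    (Qu : ∀ t, (Σ s : St t, I t s) → Jt t)
    (hu : ∀ t, IsSeElem (ru t) (Qu t))
    (rv : (Σ q : Σ t, St t, I q.1 q.2) → (Σ q : Σ t, St t, I q.1 q.2) → Prop)
    (hc : IsCompOrder rW ru Qu rv) :
    IsSeElem (A := fun q : Σ t, St t => I q.1 q.2) rv
      (fun x => Qw (FMap Qu x)) := by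
  obtain ⟨hS, hR, hM⟩ := hc
  obtain ⟨⟨hwS, hwr, hwNI⟩, hwMono⟩ := hw
  refine ⟨⟨hS, ?_, ?_⟩, ?_⟩
  · intro q a b
    rw [(hu q.1).1.2.1 q.2 a b]
    exact hR q.1 ⟨q.2, a⟩ ⟨q.2, b⟩
  · rintro ⟨t₁, s₁⟩ ⟨t₂, s₂⟩ hne ⟨a₁, b₁, a₂, b₂, h1, h2, h3⟩
    by_cases ht : t₁ = t₂
    · subst ht
      have hs : s₁ ≠ s₂ := fun h => hne (by rw [h])
      exact (hu t₁).1.2.2 s₁ s₂ hs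
        ⟨a₁, b₁, a₂, b₂, (hR t₁ ⟨s₁, a₁⟩ ⟨s₂, a₂⟩).mpr h1,
          (hR t₁ ⟨s₂, a₂⟩ ⟨s₁, b₁⟩).mpr h2, (hR t₁ ⟨s₁, b₁⟩ ⟨s₂, b₂⟩).mpr h3⟩
    · have g : ∀ {x y : Σ q : Σ t, St t, I q.1 q.2}, rv x y → x.1.1 ≠ y.1.1 →
          rW (FMap Qu x) (FMap Qu y) := by
        intro x y hxy hne'
        rcases hM x y hxy with he | hr
        · exact absurd (congrArg Sigma.fst he) hne'
        · exact hr
      exact hwNI t₁ t₂ ht ⟨Qu t₁ ⟨s₁, a₁⟩, Qu t₁ ⟨s₁, b₁⟩, Qu t₂ ⟨s₂, a₂⟩,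
        Qu t₂ ⟨s₂, b₂⟩, g h1 ht, g h2 (Ne.symm ht), g h3 ht⟩
  · intro x y hxy
    rcases hM x y hxy with he | hr
    · exact le_of_eq (congrArg Qw he)
    · exact hwMono _ _ hr

end mainlemmas
/-- (a) There is a unique total order `>_v` on `⊔_{s∈S} I_s`
restricting to each `>_{u_t}` and making `⊔_t Q_{u_t}` nondecreasing; (b) together
with `Q_w ∘ ⊔_t Q_{u_t}` it is an element of `se(S)^J` with inputs `{I_s}_{s∈S}`. -/
theorem statement12
    {T : Type*} [Fintype T] {St : T → Type*} [∀ t, Fintype (St t)]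
    {I : ∀ t, St t → Type*} [∀ t s, Fintype (I t s)] [∀ t s, LinearOrder (I t s)]
    [∀ t s, Nonempty (I t s)]
    {Jt : T → Type*} [∀ t, Fintype (Jt t)] [∀ t, LinearOrder (Jt t)]
    [∀ t, Nonempty (Jt t)]
    {J : Type*} [Fintype J] [LinearOrder J] [Nonempty J]
    (rW : (Σ t, Jt t) → (Σ t, Jt t) → Prop) (Qw : (Σ t, Jt t) → J)
    (hw : IsSeElem rW Qw)
    (ru : ∀ t, (Σ s : St t, I t s) → (Σ s : St t, I t s) → Prop)
    (Qu : ∀ t, (Σ s : St t, I t s) → Jt t)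
    (hu : ∀ t, IsSeElem (ru t) (Qu t)) :
    (∃! rv : (Σ q : Σ t, St t, I q.1 q.2) → (Σ q : Σ t, St t, I q.1 q.2) → Prop,
        IsCompOrder rW ru Qu rv) ∧
    (∀ rv : (Σ q : Σ t, St t, I q.1 q.2) → (Σ q : Σ t, St t, I q.1 q.2) → Prop,
        IsCompOrder rW ru Qu rv →
        IsSeElem (A := fun q : Σ t, St t => I q.1 q.2) rv
          (fun x => Qw (FMap Qu x))) := by

  have hcomp : IsCompOrder rW ru Qu (RV rW ru Qu) :=
    rv_isCompOrder rW ru Qu hw.1.1 hw.1.2.1 hu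
  refine ⟨⟨RV rW ru Qu, hcomp, ?_⟩,
    fun rv h => compOrder_isSeElem rW Qw hw ru Qu hu rv h⟩
  intro rv' h'
  funext x y
  exact propext
    ⟨fun hxy => isCompOrder_imp rW ru Qu hw.1.1 hu rv' (RV rW ru Qu) h' hcomp x y hxy,
     fun hxy => isCompOrder_imp rW ru Qu hw.1.1 hu (RV rW ru Qu) rv' hcomp h' x y hxy⟩
end

section
/- Let T be a finite set, {S_t}_{t∈T} a family of finite sets with S = ⊔_{t∈T} S_t, and let I_s (s ∈ S), J_t (t ∈ T), and J be nonempty finite linearly ordered sets. Let w ∈ se(T)^J with inputs {J_t}, let u_t ∈ se(S_t)^{J_t} with inputs {I_s}_{s∈S_t} for each t ∈ T, and let v ∈ se(S)^J be their operadic composition: >_v is the unique total order on ⊔_{s∈S} I_s restricting to each >_{u_t} and making ⊔_{t} Q_{u_t} : ⊔_{s∈S} I_s → (⊔_t J_t, >_w) nondecreasing, and Q_v = Q_w ∘ ⊔_t Q_{u_t}. Then |v| − |S| ≤ (|w| − |T|) + Σ_{t∈T} (|u_t| − |S_t|), where |u| denotes the number of elementary equivalence classes of the element u. -/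
/-- Elementary equivalence of `x, y ∈ ⊔_i A i` with respect to the order `r`:
they lie in the same `A i` and every element strictly between them lies in `A i`. -/
def ElemEquiv {ι : Type*} {A : ι → Type*}
    (r : (Σ i, A i) → (Σ i, A i) → Prop) (x y : Σ i, A i) : Prop :=
  x.1 = y.1 ∧
    ∀ z : Σ i, A i, (r x z ∧ r z y) ∨ (r y z ∧ r z x) → z.1 = x.1

/-- The number of elementary equivalence classes. -/
noncomputable def NumClasses {ι : Type*} {A : ι → Type*}
    (r : (Σ i, A i) → (Σ i, A i) → Prop) : ℕ :=
  Nat.card {C : Set (Σ i, A i) // ∃ x, C = {y | ElemEquiv r x y}}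

section Aux

variable {ι : Type*} {A : ι → Type*}

/-- `x` is the least element of its elementary equivalence class. -/
def CMin (r : (Σ i, A i) → (Σ i, A i) → Prop) (x : Σ i, A i) : Prop :=
  ∀ y, ElemEquiv r x y → ¬ r y x

/-- `x` is the least element of its component. -/
def CompLeast (r : (Σ i, A i) → (Σ i, A i) → Prop) (x : Σ i, A i) : Prop :=
  ∀ y : Σ i, A i, y.1 = x.1 → ¬ r y x

variable {r : (Σ i, A i) → (Σ i, A i) → Prop}

lemma elemEquiv_refl (hr : IsStrictTotalOrder _ r) (x : Σ i, A i) : ElemEquiv r x x := by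
  haveI := hr
  refine ⟨rfl, fun z hz => ?_⟩
  rcases hz with ⟨h1, h2⟩ | ⟨h1, h2⟩ <;>
    exact absurd (_root_.trans h1 h2) (irrefl_of r x)

lemma elemEquiv_symm {x y : Σ i, A i} (h : ElemEquiv r x y) : ElemEquiv r y x := by
  refine ⟨h.1.symm, fun z hz => ?_⟩
  rw [← h.1]
  exact h.2 z hz.symm

lemma elemEquiv_trans (hr : IsStrictTotalOrder _ r) {x y z : Σ i, A i}
    (hxy : ElemEquiv r x y) (hyz : ElemEquiv r y z) : ElemEquiv r x z := by
  haveI := hr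
  refine ⟨hxy.1.trans hyz.1, fun w hw => ?_⟩
  rcases hw with ⟨h1, h2⟩ | ⟨h1, h2⟩
  · rcases trichotomous_of r w y with hwy | rfl | hyw
    · exact hxy.2 w (Or.inl ⟨h1, hwy⟩)
    · exact hxy.1.symm
    · exact (hyz.2 w (Or.inl ⟨hyw, h2⟩)).trans hxy.1.symm
  · rcases trichotomous_of r w y with hwy | rfl | hyw
    · exact (hyz.2 w (Or.inr ⟨h1, hwy⟩)).trans hxy.1.symm
    · exact hxy.1.symm
    · exact hxy.2 w (Or.inr ⟨hyw, h2⟩)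

lemma exists_rmin [Finite (Σ i, A i)] (hr : IsStrictTotalOrder _ r)
    (p : (Σ i, A i) → Prop) (hp : ∃ x, p x) :
    ∃ m, p m ∧ ∀ y, p y → ¬ r y m := by
  classical
  haveI := hr
  letI : LinearOrder (Σ i, A i) := linearOrderOfSTO r
  obtain ⟨m, hm, hmin⟩ := Set.exists_min_image {x | p x} id (Set.toFinite _) hp
  exact ⟨m, hm, fun y hy hry => absurd (hmin y hy) (not_le_of_gt (show y < m from hry))⟩

lemma exists_rmax [Finite (Σ i, A i)] (hr : IsStrictTotalOrder _ r)
    (p : (Σ i, A i) → Prop) (hp : ∃ x, p x) :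
    ∃ m, p m ∧ ∀ y, p y → ¬ r m y := by
  classical
  haveI := hr
  letI : LinearOrder (Σ i, A i) := linearOrderOfSTO r
  obtain ⟨m, hm, hmax⟩ := Set.exists_max_image {x | p x} id (Set.toFinite _) hp
  exact ⟨m, hm, fun y hy hry => absurd (hmax y hy) (not_le_of_gt (show m < y from hry))⟩

lemma rtrichot (hr : IsStrictTotalOrder _ r) (x y : Σ i, A i) :
    r x y ∨ x = y ∨ r y x := by haveI := hr; exact trichotomous_of r x y

lemma numClasses_eq_card_cmin [Finite (Σ i, A i)] (hr : IsStrictTotalOrder _ r) :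
    NumClasses r = Nat.card {x // CMin r x} := by
  haveI := hr
  refine (Nat.card_eq_of_bijective
    (fun x : {x // CMin r x} =>
      (⟨{y | ElemEquiv r x.1 y}, x.1, rfl⟩ :
        {C : Set (Σ i, A i) // ∃ x, C = {y | ElemEquiv r x y}})) ⟨?_, ?_⟩).symm
  · rintro ⟨x₁, h₁⟩ ⟨x₂, h₂⟩ h
    have hset : {y | ElemEquiv r x₁ y} = {y | ElemEquiv r x₂ y} := congrArg Subtype.val h
    have hx : ElemEquiv r x₁ x₂ := by
      have : x₂ ∈ {y | ElemEquiv r x₂ y} := elemEquiv_refl hr x₂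
      rw [← hset] at this; exact this
    rcases rtrichot hr x₁ x₂ with h12 | heq | h21
    · exact absurd h12 (h₂ x₁ (elemEquiv_symm hx))
    · exact Subtype.ext heq
    · exact absurd h21 (h₁ x₂ hx)
  · rintro ⟨C, x₀, rfl⟩
    obtain ⟨m, hm, hmin⟩ := exists_rmin hr (ElemEquiv r x₀) ⟨x₀, elemEquiv_refl hr x₀⟩
    refine ⟨⟨m, fun y hy => hmin y (elemEquiv_trans hr hm hy)⟩, ?_⟩
    refine Subtype.ext ?_
    show {y | ElemEquiv r m y} = {y | ElemEquiv r x₀ y}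
    ext y
    exact ⟨fun hy => elemEquiv_trans hr hm hy,
      fun hy => elemEquiv_trans hr (elemEquiv_symm hm) hy⟩

lemma compLeast_cmin {x : Σ i, A i} (h : CompLeast r x) : CMin r x :=
  fun y hy => h y hy.1.symm

lemma card_compLeast [Finite (Σ i, A i)] [∀ i, Nonempty (A i)] (hr : IsStrictTotalOrder _ r) :
    Nat.card {x // CompLeast r x} = Nat.card ι := by
  refine Nat.card_eq_of_bijective (fun x : {x // CompLeast r x} => x.1.1) ⟨?_, ?_⟩
  · rintro ⟨x₁, h₁⟩ ⟨x₂, h₂⟩ h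
    simp only at h
    rcases rtrichot hr x₁ x₂ with h12 | heq | h21
    · exact absurd h12 (h₂ x₁ h)
    · exact Subtype.ext heq
    · exact absurd h21 (h₁ x₂ h.symm)
  · intro i
    obtain ⟨m, hm, hmin⟩ := exists_rmin hr (fun x => x.1 = i)
      ⟨⟨i, Classical.arbitrary _⟩, rfl⟩
    exact ⟨⟨m, fun y hy => hmin y (hy.trans hm)⟩, hm⟩

lemma card_subtype_split {α : Type*} [Finite α] (p q : α → Prop) :
    Nat.card {x // p x} = Nat.card {x // p x ∧ q x} + Nat.card {x // p x ∧ ¬ q x} := by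
  classical
  rw [← Nat.card_sum]
  refine Nat.card_congr ?_
  exact (Equiv.sumCompl fun x : {x // p x} => q x.1).symm.trans
    (Equiv.sumCongr (Equiv.subtypeSubtypeEquivSubtypeInter p q)
      (Equiv.subtypeSubtypeEquivSubtypeInter p fun x => ¬ q x))

lemma numClasses_split [Finite (Σ i, A i)] [∀ i, Nonempty (A i)]
    (hr : IsStrictTotalOrder _ r) :
    NumClasses r = Nat.card ι + Nat.card {x // CMin r x ∧ ¬ CompLeast r x} := by
  rw [numClasses_eq_card_cmin hr, card_subtype_split (CMin r) (CompLeast r)]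
  congr 1
  rw [← card_compLeast hr]
  exact Nat.card_congr (Equiv.subtypeEquivRight fun x =>
    ⟨fun h => h.2, fun h => ⟨compLeast_cmin h, h⟩⟩)

lemma nat_card_sigma {T : Type*} [Fintype T] (C : T → Type*) [∀ t, Finite (C t)] :
    Nat.card (Σ t, C t) = ∑ t, Nat.card (C t) := by
  letI : ∀ t, Fintype (C t) := fun t => Fintype.ofFinite _
  simp [Nat.card_eq_fintype_card, Fintype.card_sigma]

end Aux

/-- For the operadic composition `v` of `w` with the `u_t`'s one
has `|v| − |S| ≤ (|w| − |T|) + Σ_t (|u_t| − |S_t|)`, where `|·|` counts elementary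
equivalence classes. -/
theorem statement13
    {T : Type*} [Fintype T] {St : T → Type*} [∀ t, Fintype (St t)]
    {I : ∀ t, St t → Type*} [∀ t s, Fintype (I t s)] [∀ t s, LinearOrder (I t s)]
    [∀ t s, Nonempty (I t s)]
    {Jt : T → Type*} [∀ t, Fintype (Jt t)] [∀ t, LinearOrder (Jt t)]
    [∀ t, Nonempty (Jt t)]
    {J : Type*} [Fintype J] [LinearOrder J] [Nonempty J]
    (rW : (Σ t, Jt t) → (Σ t, Jt t) → Prop) (Qw : (Σ t, Jt t) → J)
    (hw : IsSeElem rW Qw)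
    (ru : ∀ t, (Σ s : St t, I t s) → (Σ s : St t, I t s) → Prop)
    (Qu : ∀ t, (Σ s : St t, I t s) → Jt t)
    (hu : ∀ t, IsSeElem (ru t) (Qu t))
    (rv : (Σ q : Σ t, St t, I q.1 q.2) → (Σ q : Σ t, St t, I q.1 q.2) → Prop)
    (hv : IsCompOrder rW ru Qu rv) :
    (NumClasses rv : ℤ) - Fintype.card (Σ t, St t) ≤
      ((NumClasses rW : ℤ) - Fintype.card T) +
        ∑ t : T, ((NumClasses (ru t) : ℤ) - Fintype.card (St t)) := by
  classical
  obtain ⟨hvSTO, hres, hmono⟩ := hv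
  have hWSTO : IsStrictTotalOrder _ rW := hw.1.1
  have hUSTO : ∀ t, IsStrictTotalOrder _ (ru t) := fun t => (hu t).1.1
  haveI := hvSTO
  have hmono' : ∀ p q : Σ q : Σ t, St t, I q.1 q.2, rv p q → p.1.1 ≠ q.1.1 →
      rW (FMap Qu p) (FMap Qu q) := by
    intro p q h hne
    rcases hmono p q h with he | hlt
    · exact absurd (congrArg Sigma.fst he) hne
    · exact hlt
  have rvtr : ∀ {a b c}, rv a b → rv b c → rv a c := fun h1 h2 => _root_.trans h1 h2
  have rWtr : ∀ {a b c}, rW a b → rW b c → rW a c := by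
    haveI := hWSTO; intro a b c h1 h2; exact _root_.trans h1 h2
  let P : (Σ q : Σ t, St t, I q.1 q.2) → Prop := fun x =>
    ∃ y z : Σ q : Σ t, St t, I q.1 q.2, y.1 = x.1 ∧ rv y x ∧
      (∀ p : Σ q : Σ t, St t, I q.1 q.2, p.1 = x.1 → rv p x → p = y ∨ rv p y) ∧
      rv y z ∧ rv z x ∧ z.1.1 = x.1.1
  have hymax : ∀ x : Σ q : Σ t, St t, I q.1 q.2, ¬ CompLeast rv x →
      ∃ y : Σ q : Σ t, St t, I q.1 q.2, y.1 = x.1 ∧ rv y x ∧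
        (∀ p : Σ q : Σ t, St t, I q.1 q.2, p.1 = x.1 → rv p x → p = y ∨ rv p y) := by
    intro x hx
    unfold CompLeast at hx
    push_neg at hx
    obtain ⟨y0, hy01, hy02⟩ := hx
    obtain ⟨m, ⟨hm1, hm2⟩, hmax⟩ := exists_rmax hvSTO
      (fun p => p.1 = x.1 ∧ rv p x) ⟨y0, hy01, hy02⟩
    refine ⟨m, hm1, hm2, fun p hp1 hp2 => ?_⟩
    rcases rtrichot hvSTO p m with h | h | h
    · exact Or.inr h
    · exact Or.inl h
    · exact absurd h (hmax p ⟨hp1, hp2⟩)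
  have keyA : ∀ (t : T) (s₀ : St t) (a : I t s₀),
      CMin rv ⟨⟨t, s₀⟩, a⟩ → P ⟨⟨t, s₀⟩, a⟩ →
      CMin (ru t) ⟨s₀, a⟩ ∧ ¬ CompLeast (ru t) ⟨s₀, a⟩ := by
    intro t s₀ a hmin hP
    obtain ⟨y, z, hy1, hyx, hmax, hyz, hzx, hz1⟩ := hP
    obtain ⟨⟨ty, sy⟩, ay⟩ := y
    obtain ⟨h1', h2'⟩ := Sigma.mk.inj_iff.mp hy1
    have h1s : t = ty := h1'.symm
    subst h1s
    have h2s : s₀ = sy := (eq_of_heq h2').symm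
    subst h2s
    obtain ⟨⟨tz, sz⟩, az⟩ := z
    have hzs : t = tz := Eq.symm (hz1 : tz = t)
    subst hzs
    have hszne : sz ≠ s₀ := by
      intro he; subst he
      rcases hmax ⟨⟨t, sz⟩, az⟩ rfl hzx with he2 | hlt
      · exact (irrefl_of rv _) (he2 ▸ hyz)
      · exact (irrefl_of rv _) (rvtr hyz hlt)
    constructor
    · rintro ⟨sq, aq⟩ hq hqlt
      have hq1 : s₀ = sq := hq.1
      subst hq1
      have hqx : rv ⟨⟨t, s₀⟩, aq⟩ ⟨⟨t, s₀⟩, a⟩ := (hres t ⟨s₀, aq⟩ ⟨s₀, a⟩).mp hqlt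
      have hqy : rv ⟨⟨t, s₀⟩, aq⟩ ⟨⟨t, sz⟩, az⟩ := by
        rcases hmax ⟨⟨t, s₀⟩, aq⟩ rfl hqx with he | hlt
        · exact he.symm ▸ hyz
        · exact rvtr hlt hyz
      have hh1 : ru t ⟨s₀, aq⟩ ⟨sz, az⟩ := (hres t _ _).mpr hqy
      have hh2 : ru t ⟨sz, az⟩ ⟨s₀, a⟩ := (hres t _ _).mpr hzx
      exact hszne (hq.2 ⟨sz, az⟩ (Or.inr ⟨hh1, hh2⟩))
    · intro hCL
      exact hCL ⟨s₀, ay⟩ rfl ((hres t ⟨s₀, ay⟩ ⟨s₀, a⟩).mpr hyx)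
  have keyB : ∀ x : Σ q : Σ t, St t, I q.1 q.2, CMin rv x → ¬ CompLeast rv x → ¬ P x →
      ∃ y z : Σ q : Σ t, St t, I q.1 q.2, y.1 = x.1 ∧ rv y x ∧
        (∀ p : Σ q : Σ t, St t, I q.1 q.2, p.1 = x.1 → rv p x → p = y ∨ rv p y) ∧
        rv y z ∧ rv z x ∧ z.1.1 ≠ x.1.1 := by
    intro x hCM hnCL hnP
    obtain ⟨y, hy1, hyx, hmax⟩ := hymax x hnCL
    have hne : ¬ ElemEquiv rv x y := fun h => hCM y h hyx
    have hz : ∃ z : Σ q : Σ t, St t, I q.1 q.2,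
        ((rv x z ∧ rv z y) ∨ (rv y z ∧ rv z x)) ∧ z.1 ≠ x.1 := by
      by_contra hno
      push_neg at hno
      exact hne ⟨hy1.symm, fun z hz => hno z hz⟩
    obtain ⟨z, hz, hzne⟩ := hz
    rcases hz with ⟨hb1, hb2⟩ | ⟨hb1, hb2⟩
    · exact absurd (rvtr (rvtr hb1 hb2) hyx) (irrefl_of rv x)
    · refine ⟨y, z, hy1, hyx, hmax, hb1, hb2, ?_⟩
      intro hzt
      exact hnP ⟨y, z, hy1, hyx, hmax, hb1, hb2, hzt⟩
  have hMex : ∀ yy : Σ t, Jt t, ∃ m, ElemEquiv rW yy m ∧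
      ∀ z, ElemEquiv rW yy z → ¬ rW z m :=
    fun yy => exists_rmin hWSTO (ElemEquiv rW yy) ⟨yy, elemEquiv_refl hWSTO yy⟩
  choose M hM1 hM2 using hMex
  have keyC : ∀ x : Σ q : Σ t, St t, I q.1 q.2, CMin rv x → ¬ CompLeast rv x → ¬ P x →
      CMin rW (M (FMap Qu x)) ∧ ¬ CompLeast rW (M (FMap Qu x)) := by
    intro x hCM hnCL hnP
    obtain ⟨y, z, hy1, hyx, hmax, hyz, hzx, hzt⟩ := keyB x hCM hnCL hnP
    have hyt : y.1.1 = x.1.1 := congrArg Sigma.fst hy1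
    have hfyz : rW (FMap Qu y) (FMap Qu z) :=
      hmono' y z hyz (fun h => hzt (h.symm.trans hyt))
    have hfzx : rW (FMap Qu z) (FMap Qu x) := hmono' z x hzx hzt
    have hfx_m := hM1 (FMap Qu x)
    have hzm : rW (FMap Qu z) (M (FMap Qu x)) := by
      rcases rtrichot hWSTO (FMap Qu z) (M (FMap Qu x)) with h | h | h
      · exact h
      · exact absurd (hfx_m.1.trans (congrArg Sigma.fst h.symm) : x.1.1 = z.1.1).symm hzt
      · exact absurd (hfx_m.2 (FMap Qu z) (Or.inr ⟨h, hfzx⟩) : z.1.1 = x.1.1) hzt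
    have hym : rW (FMap Qu y) (M (FMap Qu x)) := rWtr hfyz hzm
    constructor
    · intro w hw hww
      exact hM2 (FMap Qu x) w (elemEquiv_trans hWSTO hfx_m hw) hww
    · intro hCL
      exact hCL (FMap Qu y) (hyt.trans hfx_m.1) hym
  have hcore : ∀ (t : T) (s₁ s₂ : St t) (a₁ : I t s₁) (a₂ : I t s₂),
      rv ⟨⟨t, s₁⟩, a₁⟩ ⟨⟨t, s₂⟩, a₂⟩ →
      CMin rv ⟨⟨t, s₂⟩, a₂⟩ → ¬ CompLeast rv ⟨⟨t, s₂⟩, a₂⟩ → ¬ P ⟨⟨t, s₂⟩, a₂⟩ →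
      ElemEquiv rW (FMap Qu ⟨⟨t, s₁⟩, a₁⟩) (FMap Qu ⟨⟨t, s₂⟩, a₂⟩) → False := by
    intro t s₁ s₂ a₁ a₂ h12 hCM2 hnCL2 hnP2 heq
    obtain ⟨y, z, hy1, hyx, hmax, hyz, hzx, hzt⟩ := keyB _ hCM2 hnCL2 hnP2
    have hyzW : rW (FMap Qu y) (FMap Qu z) :=
      hmono' y z hyz (fun h => hzt (h.symm.trans (congrArg Sigma.fst hy1)))
    have hx1 : rv ⟨⟨t, s₁⟩, a₁⟩ y ∨ (⟨⟨t, s₁⟩, a₁⟩ : Σ q : Σ t, St t, I q.1 q.2) = y := by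
      rcases rtrichot hvSTO (⟨⟨t, s₁⟩, a₁⟩ : Σ q : Σ t, St t, I q.1 q.2) y with h | h | h
      · exact Or.inl h
      · exact Or.inr h
      · exact absurd ⟨y, ⟨⟨t, s₁⟩, a₁⟩, hy1, hyx, hmax, h, h12, rfl⟩ hnP2
    have h1z : rW (FMap Qu ⟨⟨t, s₁⟩, a₁⟩) (FMap Qu z) := by
      rcases hx1 with h | h
      · rcases hmono _ _ h with he | hlt
        · exact he.symm ▸ hyzW
        · exact rWtr hlt hyzW
      · exact h.symm ▸ hyzW
    have h2z : rW (FMap Qu z) (FMap Qu ⟨⟨t, s₂⟩, a₂⟩) := hmono' z _ hzx hzt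
    exact hzt (heq.2 (FMap Qu z) (Or.inl ⟨h1z, h2z⟩))
  have ev : NumClasses rv = Nat.card (Σ t, St t) +
      Nat.card {x : Σ q : Σ t, St t, I q.1 q.2 // CMin rv x ∧ ¬ CompLeast rv x} :=
    numClasses_split hvSTO
  have ew : NumClasses rW = Nat.card T +
      Nat.card {y : Σ t, Jt t // CMin rW y ∧ ¬ CompLeast rW y} :=
    numClasses_split hWSTO
  have eu : ∀ t, NumClasses (ru t) = Nat.card (St t) +
      Nat.card {z : Σ s : St t, I t s // CMin (ru t) z ∧ ¬ CompLeast (ru t) z} :=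
    fun t => numClasses_split (hUSTO t)
  have esplit := card_subtype_split
    (fun x : Σ q : Σ t, St t, I q.1 q.2 => CMin rv x ∧ ¬ CompLeast rv x) P
  have hF1p : ∀ x : {x : Σ q : Σ t, St t, I q.1 q.2 //
      (CMin rv x ∧ ¬ CompLeast rv x) ∧ P x},
      CMin (ru x.1.1.1) ⟨x.1.1.2, x.1.2⟩ ∧ ¬ CompLeast (ru x.1.1.1) ⟨x.1.1.2, x.1.2⟩ := by
    rintro ⟨⟨⟨t, s₀⟩, a⟩, ⟨hCM, _⟩, hP⟩
    exact keyA t s₀ a hCM hP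
  have c1 : Nat.card {x : Σ q : Σ t, St t, I q.1 q.2 //
      (CMin rv x ∧ ¬ CompLeast rv x) ∧ P x} ≤
      ∑ t, Nat.card {z : Σ s : St t, I t s // CMin (ru t) z ∧ ¬ CompLeast (ru t) z} := by
    rw [← nat_card_sigma]
    refine Nat.card_le_card_of_injective
      (fun x => ⟨x.1.1.1, ⟨⟨x.1.1.2, x.1.2⟩, hF1p x⟩⟩) ?_
    rintro ⟨⟨⟨t₁, s₁⟩, a₁⟩, h₁⟩ ⟨⟨⟨t₂, s₂⟩, a₂⟩, h₂⟩ h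
    exact Subtype.ext (congrArg (fun c : Σ t,
      {z : Σ s : St t, I t s // CMin (ru t) z ∧ ¬ CompLeast (ru t) z} =>
      (⟨⟨c.1, c.2.1.1⟩, c.2.1.2⟩ : Σ q : Σ t, St t, I q.1 q.2)) h)
  have hF2p : ∀ x : {x : Σ q : Σ t, St t, I q.1 q.2 //
      (CMin rv x ∧ ¬ CompLeast rv x) ∧ ¬ P x},
      CMin rW (M (FMap Qu x.1)) ∧ ¬ CompLeast rW (M (FMap Qu x.1)) :=
    fun x => keyC x.1 x.2.1.1 x.2.1.2 x.2.2
  have c2 : Nat.card {x : Σ q : Σ t, St t, I q.1 q.2 //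
      (CMin rv x ∧ ¬ CompLeast rv x) ∧ ¬ P x} ≤
      Nat.card {y : Σ t, Jt t // CMin rW y ∧ ¬ CompLeast rW y} := by
    refine Nat.card_le_card_of_injective (fun x => ⟨M (FMap Qu x.1), hF2p x⟩) ?_
    intro x₁ x₂ h
    have hMeq : M (FMap Qu x₁.1) = M (FMap Qu x₂.1) := congrArg Subtype.val h
    have hEq : ElemEquiv rW (FMap Qu x₁.1) (FMap Qu x₂.1) :=
      elemEquiv_trans hWSTO (hM1 _) (hMeq.symm ▸ elemEquiv_symm (hM1 _))
    obtain ⟨⟨⟨t₁, s₁⟩, a₁⟩, ⟨hCM₁, hnCL₁⟩, hnP₁⟩ := x₁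
    obtain ⟨⟨⟨t₂, s₂⟩, a₂⟩, ⟨hCM₂, hnCL₂⟩, hnP₂⟩ := x₂
    have ht : t₁ = t₂ := hEq.1
    subst ht
    refine Subtype.ext ?_
    rcases rtrichot hvSTO (⟨⟨t₁, s₁⟩, a₁⟩ : Σ q : Σ t, St t, I q.1 q.2)
      ⟨⟨t₁, s₂⟩, a₂⟩ with h' | h' | h'
    · exact (hcore t₁ s₁ s₂ a₁ a₂ h' hCM₂ hnCL₂ hnP₂ hEq).elim
    · exact h'
    · exact (hcore t₁ s₂ s₁ a₂ a₁ h' hCM₁ hnCL₁ hnP₁ (elemEquiv_symm hEq)).elim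
  have hsum : ∑ t : T, ((NumClasses (ru t) : ℤ) - Fintype.card (St t)) =
      ∑ t : T, (Nat.card {z : Σ s : St t, I t s //
        CMin (ru t) z ∧ ¬ CompLeast (ru t) z} : ℤ) := by
    refine Finset.sum_congr rfl fun t _ => ?_
    rw [eu t]
    push_cast [Nat.card_eq_fintype_card]
    ring
  rw [hsum, ev, ew, esplit, Nat.card_eq_fintype_card (α := Σ t, St t),
    Nat.card_eq_fintype_card (α := T)]
  push_cast
  have c1' : (Nat.card {x : Σ q : Σ t, St t, I q.1 q.2 //
      (CMin rv x ∧ ¬ CompLeast rv x) ∧ P x} : ℤ) ≤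
      ∑ t : T, (Nat.card {z : Σ s : St t, I t s //
        CMin (ru t) z ∧ ¬ CompLeast (ru t) z} : ℤ) := by
    exact_mod_cast c1
  have c2' : (Nat.card {x : Σ q : Σ t, St t, I q.1 q.2 //
      (CMin rv x ∧ ¬ CompLeast rv x) ∧ ¬ P x} : ℤ) ≤
      (Nat.card {y : Σ t, Jt t // CMin rW y ∧ ¬ CompLeast rW y} : ℤ) := by
    exact_mod_cast c2
  linarith
end

section
/- Let S be a finite set, let I_s (s ∈ S) be nonempty finite linearly ordered sets, let J be a finite linearly ordered set, and let J′ = J ⊔ {M} be J with a new greatest element M adjoined. Then the assignment π ↦ (π|_{⊔ I_s}, Q), where Q(x) is the least element j ∈ J with x <_π j if such j exists and Q(x) = M otherwise, is a bijection from the set of total orders π on (⊔_{s∈S} I_s) ⊔ J restricting to the given order on each I_s and on J and satisfying the non-interleaving condition, onto the set of pairs (>, Q) where > is a total order on ⊔_{s∈S} I_s restricting to the given order on each I_s and satisfying the non-interleaving condition, and Q : ⊔_{s∈S} I_s → J′ is nondecreasing with respect to >. -/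
lemma statement15_tri_of_or {α : Type*} {r : α → α → Prop} {a b : α}
    (h : r a b ∨ a = b ∨ r b a) : ¬ r a b → ¬ r b a → a = b := by
  rintro h1 h2
  rcases h with h | h | h
  · exact absurd h h1
  · exact h
  · exact absurd h h2

open scoped Classical in
/-- For a strict total order `r` on `α ⊕ J` restricting to the order on `J`,
`r (inl x) (inr j)` iff the minimum of `{j' | r (inl x) (inr j')}` is `≤ j`. -/
lemma statement15_key {α J : Type*} [Fintype J] [LinearOrder J]
    (r : α ⊕ J → α ⊕ J → Prop)
    (hT : IsStrictTotalOrder (α ⊕ J) r)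
    (hJ : ∀ j j' : J, j < j' ↔ r (Sum.inr j) (Sum.inr j'))
    (x : α) (j : J) :
    r (Sum.inl x) (Sum.inr j) ↔
      (Finset.univ.filter fun j' : J => r (Sum.inl x) (Sum.inr j')).min ≤ (j : WithTop J) := by
  constructor
  · intro h
    exact Finset.min_le (by simp [h])
  · intro h
    have hne : (Finset.univ.filter fun j' : J => r (Sum.inl x) (Sum.inr j')).min ≠ ⊤ := by
      intro he
      rw [he] at h
      exact absurd h (by simp)
    obtain ⟨j₀, hj₀⟩ := Option.ne_none_iff_exists'.mp hne
    have hmem : j₀ ∈ Finset.univ.filter fun j' : J => r (Sum.inl x) (Sum.inr j') :=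
      Finset.mem_of_min hj₀
    have hrj₀ : r (Sum.inl x) (Sum.inr j₀) := (Finset.mem_filter.mp hmem).2
    have hle' : j₀ ≤ j := by rw [hj₀] at h; exact WithTop.coe_le_coe.mp h
    rcases eq_or_lt_of_le hle' with rfl | hlt
    · exact hrj₀
    · exact hT.trans _ _ _ hrj₀ ((hJ j₀ j).mp hlt)

open scoped Classical in
/-- The assignment `π ↦ (π|_{⊔ I_s}, Q)`, where `Q x` is the least
`j ∈ J` with `x <_π j` (and `Q x = M = ⊤` if there is no such `j`), is a bijection
from the set of non-interleaving total orders on `(⊔_{s∈S} I_s) ⊔ J` restricting to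
the given orders, onto the set of pairs `(>, Q)` of a non-interleaving total order
on `⊔_{s∈S} I_s` restricting to the given orders together with a nondecreasing map
`Q : ⊔ I_s → J′ = J ⊔ {M}`. -/
theorem statement15 {S : Type*} [Fintype S] {I : S → Type*} [∀ s, Fintype (I s)]
    [∀ s, LinearOrder (I s)] [∀ s, Nonempty (I s)]
    (J : Type*) [Fintype J] [LinearOrder J] :
    Set.BijOn
      (fun r : ((Σ s, I s) ⊕ J) → ((Σ s, I s) ⊕ J) → Prop =>
        ((fun a b : Σ s, I s => r (Sum.inl a) (Sum.inl b),
          fun x : Σ s, I s =>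
            (Finset.univ.filter fun j : J => r (Sum.inl x) (Sum.inr j)).min) :
          ((Σ s, I s) → (Σ s, I s) → Prop) × ((Σ s, I s) → WithTop J)))
      {r | IsStrictTotalOrder ((Σ s, I s) ⊕ J) r ∧
        (∀ (s : S) (a b : I s), a < b ↔ r (Sum.inl ⟨s, a⟩) (Sum.inl ⟨s, b⟩)) ∧
        (∀ j j' : J, j < j' ↔ r (Sum.inr j) (Sum.inr j')) ∧
        (∀ s s' : S, s ≠ s' → ¬ ∃ (a₁ b₁ : I s) (a₂ b₂ : I s'),
          r (Sum.inl ⟨s, a₁⟩) (Sum.inl ⟨s', a₂⟩) ∧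
          r (Sum.inl ⟨s', a₂⟩) (Sum.inl ⟨s, b₁⟩) ∧
          r (Sum.inl ⟨s, b₁⟩) (Sum.inl ⟨s', b₂⟩))}
      {q | IsStrictTotalOrder (Σ s, I s) q.1 ∧
        (∀ (s : S) (a b : I s), a < b ↔ q.1 ⟨s, a⟩ ⟨s, b⟩) ∧
        (∀ s s' : S, s ≠ s' → ¬ ∃ (a₁ b₁ : I s) (a₂ b₂ : I s'),
          q.1 ⟨s, a₁⟩ ⟨s', a₂⟩ ∧ q.1 ⟨s', a₂⟩ ⟨s, b₁⟩ ∧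
          q.1 ⟨s, b₁⟩ ⟨s', b₂⟩) ∧
        (∀ x y : Σ s, I s, q.1 x y → q.2 x ≤ q.2 y)} := by
  classical
  constructor
  · -- MapsTo
    rintro r ⟨hT, hI, hJ, hNI⟩
    refine ⟨?_, ?_, ?_, ?_⟩
    · -- strict total order on the restriction
      refine { trichotomous := ?_, irrefl := ?_, trans := ?_ }
      · intro a b
        refine statement15_tri_of_or ?_
        rcases @trichotomous_of _ _ hT.toTrichotomous (Sum.inl a) (Sum.inl b) with h | h | h
        · exact Or.inl h
        · exact Or.inr (Or.inl (Sum.inl.injEq .. ▸ h))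
        · exact Or.inr (Or.inr h)
      · intro a
        exact hT.irrefl (Sum.inl a)
      · intro a b c hab hbc
        exact hT.trans _ _ _ hab hbc
    · exact hI
    · exact hNI
    · -- Q nondecreasing
      intro x y hxy
      refine Finset.le_min ?_
      intro j hj
      refine Finset.min_le ?_
      simp only [Finset.mem_filter, Finset.mem_univ, true_and] at hj ⊢
      exact hT.trans _ _ _ hxy hj
  constructor
  · -- InjOn
    rintro r ⟨hT, hI, hJ, hNI⟩ r' ⟨hT', hI', hJ', hNI'⟩ h
    have h1 := congrArg Prod.fst h
    have h2 := congrArg Prod.snd h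
    simp only at h1 h2
    funext a b
    have asymm : ∀ (t' : ((Σ s, I s) ⊕ J) → ((Σ s, I s) ⊕ J) → Prop),
        IsStrictTotalOrder ((Σ s, I s) ⊕ J) t' →
        ∀ (u v : (Σ s, I s) ⊕ J), t' u v → ¬ t' v u := fun t' t u v huv hvu =>
      t.irrefl u (t.trans _ _ _ huv hvu)
    match a, b with
    | Sum.inl x, Sum.inl y =>
      exact congrFun (congrFun h1 x) y
    | Sum.inl x, Sum.inr j =>
      apply propext
      rw [statement15_key r hT hJ, statement15_key r' hT' hJ']
      rw [congrFun h2 x]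
    | Sum.inr j, Sum.inl x =>
      apply propext
      have e1 : r (Sum.inr j) (Sum.inl x) ↔ ¬ r (Sum.inl x) (Sum.inr j) := by
        constructor
        · exact fun h' h'' => asymm r hT _ _ h'' h'
        · intro h'
          rcases @trichotomous_of _ _ hT.toTrichotomous (Sum.inr j) (Sum.inl x) with h'' | h'' | h''
          · exact h''
          · exact absurd h'' (by simp)
          · exact absurd h'' h'
      have e2 : r' (Sum.inr j) (Sum.inl x) ↔ ¬ r' (Sum.inl x) (Sum.inr j) := by
        constructor
        · exact fun h' h'' => asymm r' hT' _ _ h'' h'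
        · intro h'
          rcases @trichotomous_of _ _ hT'.toTrichotomous (Sum.inr j) (Sum.inl x) with h'' | h'' | h''
          · exact h''
          · exact absurd h'' (by simp)
          · exact absurd h'' h'
      rw [e1, e2, statement15_key r hT hJ, statement15_key r' hT' hJ', congrFun h2 x]
    | Sum.inr j, Sum.inr j' =>
      exact propext ((hJ j j').symm.trans (hJ' j j'))
  · -- SurjOn
    rintro ⟨q, Q⟩ ⟨hT, hI, hNI, hQ⟩
    set r : ((Σ s, I s) ⊕ J) → ((Σ s, I s) ⊕ J) → Prop := fun a b =>
      match a, b with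
      | Sum.inl x, Sum.inl y => q x y
      | Sum.inl x, Sum.inr j => Q x ≤ (j : WithTop J)
      | Sum.inr j, Sum.inl x => (j : WithTop J) < Q x
      | Sum.inr j, Sum.inr j' => j < j' with hr
    have hQlt : ∀ x y : Σ s, I s, Q x < Q y → q x y := by
      intro x y hxy
      rcases @trichotomous_of _ _ hT.toTrichotomous x y with h | h | h
      · exact h
      · exact absurd (h ▸ hxy) (lt_irrefl _)
      · exact absurd hxy (not_lt_of_ge (hQ _ _ h))
    have hrT : IsStrictTotalOrder ((Σ s, I s) ⊕ J) r := by
      refine { trichotomous := ?_, irrefl := ?_, trans := ?_ }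
      · rintro (x | j) (y | j') <;> refine statement15_tri_of_or ?_
        · rcases @trichotomous_of _ _ hT.toTrichotomous x y with h | h | h
          · exact Or.inl h
          · exact Or.inr (Or.inl (by rw [h]))
          · exact Or.inr (Or.inr h)
        · rcases le_or_gt (Q x) (j' : WithTop J) with h | h
          · exact Or.inl h
          · exact Or.inr (Or.inr h)
        · rcases lt_or_ge (j : WithTop J) (Q y) with h | h
          · exact Or.inl h
          · exact Or.inr (Or.inr h)
        · rcases lt_trichotomy j j' with h | h | h
          · exact Or.inl h
          · exact Or.inr (Or.inl (by rw [h]))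
          · exact Or.inr (Or.inr h)
      · rintro (x | j)
        · exact hT.irrefl x
        · exact lt_irrefl j
      · rintro (x | j) (y | j') (z | j'') hab hbc
        · exact hT.trans _ _ _ hab hbc
        · exact le_trans (hQ _ _ hab) hbc
        · exact hQlt _ _ (lt_of_le_of_lt hab hbc)
        · exact le_trans hab (le_of_lt (WithTop.coe_lt_coe.mpr hbc))
        · exact lt_of_lt_of_le hab (hQ _ _ hbc)
        · exact WithTop.coe_lt_coe.mp (lt_of_lt_of_le hab hbc)
        · exact lt_trans (WithTop.coe_lt_coe.mpr hab) hbc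
        · exact lt_trans hab hbc
    refine ⟨r, ⟨hrT, hI, fun j j' => Iff.rfl, hNI⟩, ?_⟩
    -- image of r equals (q, Q)
    refine Prod.ext rfl ?_
    funext x
    show (@Finset.filter J (fun j : J => r (Sum.inl x) (Sum.inr j))
        (fun j => Classical.propDecidable _) Finset.univ).min = Q x
    have hfeq : (@Finset.filter J (fun j : J => r (Sum.inl x) (Sum.inr j))
        (fun j => Classical.propDecidable _) Finset.univ) =
        (Finset.univ.filter fun j : J => Q x ≤ (j : WithTop J)) :=
      @Finset.filter_congr J (fun j : J => r (Sum.inl x) (Sum.inr j))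
        (fun j : J => Q x ≤ (j : WithTop J)) (fun j => Classical.propDecidable _)
        (fun j => inferInstance) Finset.univ (fun j _ => Iff.rfl)
    rw [hfeq]
    cases hx : Q x with
    | top =>
      rw [Finset.filter_eq_empty_iff.mpr fun j _ => by simp, Finset.min_empty]
    | coe j₀ =>
      apply le_antisymm
      · exact Finset.min_le (by simp)
      · refine Finset.le_min ?_
        intro b hb
        simp only [Finset.mem_filter, Finset.mem_univ, true_and] at hb
        exact hb
end

section
/- For every finite nonempty set S and every configuration p ∈ Conf(S), there exists a unique pruned 2-tree (≤₁, τ) on S such that p ∈ FN_{(≤₁,τ)}; in particular, the Fox–Neuwirth cells indexed by the pruned 2-trees on S form a partition of the configuration space Conf(S). -/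
section Stmt16Aux

lemma aux_strictMono_surj_id {n : ℕ} (f : Fin n → Fin n) (hf : StrictMono f)
    (hs : Function.Surjective f) : f = id := by
  have : Set.range f = Set.range (id : Fin n → Fin n) := by
    simp [Set.range_eq_univ.mpr hs]
  exact (hf.range_inj strictMono_id).mp this

lemma aux_tau_unique {S : Type*} {n n' : ℕ} (τ : S → Fin n) (τ' : S → Fin n')
    (hτ : Function.Surjective τ) (hτ' : Function.Surjective τ')
    (h : ∀ s t, τ s < τ t ↔ τ' s < τ' t) :
    n = n' ∧ ∀ s, (τ s : ℕ) = (τ' s : ℕ) := by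
  have heq : ∀ s t, τ s = τ t → τ' s = τ' t := by
    intro s t hst
    rcases lt_trichotomy (τ' s) (τ' t) with hl | he | hl
    · exact absurd ((h s t).mpr hl) (by simp [hst])
    · exact he
    · exact absurd ((h t s).mpr hl) (by simp [hst])
  set g := Function.surjInv hτ with hg
  have hgt : ∀ j, τ (g j) = j := fun j => Function.surjInv_eq hτ j
  set e : Fin n → Fin n' := fun j => τ' (g j) with he
  have hmono : StrictMono e := by
    intro j k hjk
    apply (h (g j) (g k)).mp
    rw [hgt, hgt]; exact hjk
  have hsurj : Function.Surjective e := by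
    intro j'
    obtain ⟨t, ht⟩ := hτ' j'
    exact ⟨τ t, by rw [he]; simp only; rw [heq (g (τ t)) t (hgt (τ t)), ht]⟩
  have hbij : Function.Bijective e := ⟨hmono.injective, hsurj⟩
  have hnn : n = n' := by
    have := Fintype.card_of_bijective hbij
    simpa using this
  subst hnn
  have hid : e = id := aux_strictMono_surj_id e hmono hsurj
  refine ⟨rfl, fun s => ?_⟩
  have : τ' s = e (τ s) := (heq (g (τ s)) s (hgt (τ s))).symm
  rw [this, hid]; rfl

/-- Lemmas about a pruned 2-tree whose cell contains `p`. -/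
lemma aux_cell {S : Type*} {n : ℕ} {r : S → S → Prop} {τ : S → Fin n}
    (hT : IsPruned2Tree r τ) {p : S → ℝ × ℝ} (hp : p ∈ FNcell r τ) :
    (∀ s t, τ s < τ t ↔ (p s).1 < (p t).1) ∧
    (∀ s t, r s t ↔
      ((p s).1 < (p t).1 ∨ ((p s).1 = (p t).1 ∧ (p s).2 ≤ (p t).2))) := by
  obtain ⟨hlin, hτsurj, hmon⟩ := hT
  obtain ⟨hinj, hc1, hc2⟩ := hp
  have htot : ∀ s t : S, r s t ∨ r t s := fun s t => hlin.toTotal.total s t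
  have hrefl : ∀ s : S, r s s := fun s => hlin.toIsPartialOrder.toIsPreorder.toRefl.refl s
  have hxeq : ∀ s t, τ s = τ t → (p s).1 = (p t).1 := by
    intro s t h
    by_cases hst : s = t
    · rw [hst]
    · rcases htot s t with h1 | h1
      · exact (hc2 s t h h1 hst).1
      · exact ((hc2 t s h.symm h1 (Ne.symm hst)).1).symm
  have hlt : ∀ s t, τ s < τ t ↔ (p s).1 < (p t).1 := by
    intro s t
    constructor
    · exact hc1 s t
    · intro h
      rcases lt_trichotomy (τ s) (τ t) with h1 | h1 | h1
      · exact h1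
      · exact absurd (hxeq s t h1) (ne_of_lt h)
      · exact absurd (hc1 t s h1) (not_lt.mpr h.le)
  refine ⟨hlt, fun s t => ?_⟩
  constructor
  · intro h
    rcases lt_or_eq_of_le (hmon s t h) with h1 | h1
    · exact Or.inl (hc1 s t h1)
    · by_cases hst : s = t
      · exact Or.inr ⟨by rw [hst], by rw [hst]⟩
      · obtain ⟨h2, h3⟩ := hc2 s t h1 h hst
        exact Or.inr ⟨h2, h3.le⟩
  · rintro (h | ⟨h1, h2⟩)
    · by_contra hc
      rcases htot s t with h1 | h1
      · exact hc h1
      · exact absurd ((hlt s t).mpr h) (not_lt.mpr (hmon t s h1))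
    · by_cases hst : s = t
      · rw [hst]; exact hrefl t
      · by_contra hc
        rcases htot s t with h3 | h3
        · exact hc h3
        · have hτ : τ t = τ s := by
            rcases lt_trichotomy (τ t) (τ s) with h4 | h4 | h4
            · exact absurd (hc1 t s h4) (not_lt.mpr h1.le)
            · exact h4
            · exact absurd (hc1 s t h4) (not_lt.mpr h1.ge)
          exact absurd (hc2 t s hτ h3 (Ne.symm hst)).2 (not_lt.mpr h2)

end Stmt16Aux

/-- For every finite nonempty `S` and configuration `p ∈ Conf(S)`
there is a unique pruned 2-tree `(r, τ)` on `S` with `p ∈ FN_{(r,τ)}`; in particular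
the Fox–Neuwirth cells partition `Conf(S)`. -/
theorem statement16 {S : Type*} [Fintype S] [Nonempty S]
    (p : S → ℝ × ℝ) (hp : p ∈ Conf S) :
    (∃ (n : ℕ) (r : S → S → Prop) (τ : S → Fin n),
        IsPruned2Tree r τ ∧ p ∈ FNcell r τ) ∧
    (∀ (n n' : ℕ) (r r' : S → S → Prop) (τ : S → Fin n) (τ' : S → Fin n'),
        IsPruned2Tree r τ → p ∈ FNcell r τ →
        IsPruned2Tree r' τ' → p ∈ FNcell r' τ' →
        n = n' ∧ r = r' ∧ ∀ s, (τ s : ℕ) = (τ' s : ℕ)) := by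
  have hinj : Function.Injective p := hp
  constructor
  · -- existence
    set r : S → S → Prop := fun s t =>
      (p s).1 < (p t).1 ∨ ((p s).1 = (p t).1 ∧ (p s).2 ≤ (p t).2) with hr
    set X : Finset ℝ := Finset.univ.image (fun t => (p t).1) with hX
    set e : Fin X.card ≃o {x // x ∈ X} := X.orderIsoOfFin rfl with he
    have hmem : ∀ s : S, (p s).1 ∈ X := by
      intro s; rw [hX]; exact Finset.mem_image_of_mem _ (Finset.mem_univ s)
    set τ : S → Fin X.card := fun s => e.symm ⟨(p s).1, hmem s⟩ with hτ
    have hlt : ∀ s t, τ s < τ t ↔ (p s).1 < (p t).1 := by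
      intro s t
      rw [hτ]; simp only
      rw [e.symm.lt_iff_lt, Subtype.mk_lt_mk]
    have heqx : ∀ s t, τ s = τ t ↔ (p s).1 = (p t).1 := by
      intro s t
      rw [hτ]; simp only
      rw [EmbeddingLike.apply_eq_iff_eq, Subtype.mk.injEq]
    have hlinord : IsLinearOrder S r :=
      { refl := fun s => Or.inr ⟨rfl, le_refl _⟩
        trans := by
          rintro a b c (h | ⟨h1, h2⟩) (h' | ⟨h1', h2'⟩)
          · exact Or.inl (h.trans h')
          · exact Or.inl (lt_of_lt_of_eq h h1')
          · exact Or.inl (lt_of_eq_of_lt h1 h')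
          · exact Or.inr ⟨h1.trans h1', h2.trans h2'⟩
        antisymm := by
          rintro a b (h | ⟨h1, h2⟩) (h' | ⟨h1', h2'⟩)
          · exact absurd h' (not_lt.mpr h.le)
          · exact absurd h1' (ne_of_gt h)
          · exact absurd h1 (ne_of_gt h')
          · exact hinj (Prod.ext h1 (le_antisymm h2 h2'))
        total := by
          intro a b
          rcases lt_trichotomy (p a).1 (p b).1 with h | h | h
          · exact Or.inl (Or.inl h)
          · rcases le_total (p a).2 (p b).2 with h2 | h2
            · exact Or.inl (Or.inr ⟨h, h2⟩)
            · exact Or.inr (Or.inr ⟨h.symm, h2⟩)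
          · exact Or.inr (Or.inl h) }
    have hτsurj : Function.Surjective τ := by
      intro j
      have h2 : ↑(e j) ∈ Finset.image (fun t => (p t).1) Finset.univ := (e j).2
      rw [Finset.mem_image] at h2
      obtain ⟨t, -, ht⟩ := h2
      refine ⟨t, ?_⟩
      rw [hτ]; simp only
      have hst : (⟨(p t).1, hmem t⟩ : {x // x ∈ X}) = e j := Subtype.ext ht
      rw [hst, OrderIso.symm_apply_apply]
    refine ⟨X.card, r, τ, ⟨hlinord, hτsurj, ?_⟩, hinj, ?_, ?_⟩
    · rintro s t (h | ⟨h1, -⟩)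
      · exact ((hlt s t).mpr h).le
      · exact le_of_eq ((heqx s t).mpr h1)
    · exact fun s t h => (hlt s t).mp h
    · rintro s t hτeq (h | ⟨h1, h2⟩) hne
      · exact absurd ((heqx s t).mp hτeq) (ne_of_lt h)
      · refine ⟨h1, lt_of_le_of_ne h2 ?_⟩
        intro hy
        exact hne (hinj (Prod.ext h1 hy))
  · -- uniqueness
    intro n n' r r' τ τ' hT hpc hT' hpc'
    obtain ⟨hlt, hrr⟩ := aux_cell hT hpc
    obtain ⟨hlt', hrr'⟩ := aux_cell hT' hpc'
    have hlt2 : ∀ s t, τ s < τ t ↔ τ' s < τ' t := by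
      intro s t; rw [hlt, hlt']
    obtain ⟨hn, hτ⟩ := aux_tau_unique τ τ' hT.2.1 hT'.2.1 hlt2
    refine ⟨hn, ?_, hτ⟩
    funext s t
    exact propext ((hrr s t).trans (hrr' s t).symm)
end

section
/- Let S be a finite set with m = |S|, let N ≥ 0 be an integer, and let σ ∈ D(S, N). Then the relation <_σ on S, defined by s <_σ s̃ iff either some element of σ⁻¹(s) lies strictly between two elements of σ⁻¹(s̃), or every element of σ⁻¹(s) is smaller than every element of σ⁻¹(s̃), is a strict linear (total) order on S. -/
/-- For a finite set `S` and `σ ∈ D(S, N)`, the relation `<_σ`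
is a strict linear (total) order on `S`. -/
theorem statement17 {S : Type*} [Fintype S] (N k : ℕ)
    (hk : k = N + Fintype.card S) (σ : Fin k → S) (hσ : MemD σ) :
    IsStrictTotalOrder S (LtSigma σ) := by
  classical
  obtain ⟨hsurj, hI, hII⟩ := hσ
  have hFne : ∀ s : S, (Finset.univ.filter (fun i => σ i = s)).Nonempty := by
    intro s
    obtain ⟨i, hi⟩ := hsurj s
    exact ⟨i, by simp [hi]⟩
  set b : S → Fin k := fun s => (Finset.univ.filter (fun i => σ i = s)).max' (hFne s) with hbdef
  set a : S → Fin k := fun s => (Finset.univ.filter (fun i => σ i = s)).min' (hFne s) with hadef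
  have hb : ∀ s, σ (b s) = s := by
    intro s
    have := Finset.max'_mem _ (hFne s)
    simpa using this
  have ha : ∀ s, σ (a s) = s := by
    intro s
    have := Finset.min'_mem _ (hFne s)
    simpa using this
  have hble : ∀ s i, σ i = s → i ≤ b s := by
    intro s i hi
    exact Finset.le_max' _ i (by simp [hi])
  have hale : ∀ s i, σ i = s → a s ≤ i := by
    intro s i hi
    exact Finset.min'_le _ i (by simp [hi])
  have key : ∀ s s', s ≠ s' → (LtSigma σ s s' ↔ b s < b s') := by
    intro s s' hss
    constructor
    · rintro ⟨-, h | h⟩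
      · obtain ⟨i, j₁, j₂, hi, hj₁, hj₂, h1, h2⟩ := h
        by_contra hlt
        push_neg at hlt
        have hj2bs : j₂ ≠ b s := by
          intro hE
          exact hss (by rw [← hb s, ← hE, hj₂])
        have hj2lt : j₂ < b s := lt_of_le_of_ne (le_trans (hble s' j₂ hj₂) hlt) hj2bs
        exact hII ⟨s', s, j₁, i, j₂, b s, hss.symm, h1, h2, hj2lt, hj₁, hj₂, hi, hb s⟩
      · exact h (b s) (b s') (hb s) (hb s')
    · intro hbb
      refine ⟨hss, ?_⟩
      rcases lt_trichotomy (a s) (a s') with h | h | h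
      · right
        intro i j hi hj
        by_contra hij
        push_neg at hij
        have hji : j ≠ i := by
          intro hE
          exact hss (by rw [← hi, ← hj, hE])
        have hji' : j < i := lt_of_le_of_ne hij hji
        have h1 : a s < j := lt_of_lt_of_le h (hale s' j hj)
        have h2 : i < b s' := lt_of_le_of_lt (hble s i hi) hbb
        exact hII ⟨s, s', a s, j, i, b s', hss, h1, hji', h2, ha s, hi, hj, hb s'⟩
      · exact absurd (by rw [← ha s, h, ha s']) hss
      · left
        exact ⟨a s, a s', b s', ha s, ha s', hb s', h,
          lt_of_le_of_lt (hble s (a s) (ha s)) hbb⟩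
  refine { trichotomous := ?_, irrefl := ?_, trans := ?_ }
  · intro s s' n1 n2
    rcases eq_or_ne s s' with rfl | hss
    · rfl
    · rcases lt_trichotomy (b s) (b s') with h | h | h
      · exact absurd ((key s s' hss).2 h) n1
      · exact absurd (by rw [← hb s, h, hb s']) hss
      · exact absurd ((key s' s hss.symm).2 h) n2
  · intro s hs
    exact hs.1 rfl
  · intro s s' s'' h1 h2
    have hb1 := (key _ _ h1.1).1 h1
    have hb2 := (key _ _ h2.1).1 h2
    have hss'' : s ≠ s'' := by
      rintro rfl
      exact absurd (hb1.trans hb2) (lt_irrefl _)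
    exact (key _ _ hss'').2 (hb1.trans hb2)
end
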